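/- arXiv:1707.08071 — 4 statements merged into one kernel-verified Lean document; each statement's English description precedes it below -/
import Mathlib

section
/- Let k be a positive integer. For every colouring of the rational vector space ℚ^{ℶ_ω} of dimension ℶ_ω with k colours, there exists an infinite set X ⊆ ℚ^{ℶ_ω} such that the sumset X + X = {x + y : x, y ∈ X} is monochromatic (all its elements receive the same colour). -/
open Cardinal Pointwise

universe u

namespace LeaderRussellAux

/-- In a well-founded linear order, every infinite set contains a strictly
increasing `ℕ`-indexed sequence. -/
theorem exists_mono_seq {α : Type u} [LinearOrder α] [WellFoundedLT α] {s : Set α}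
    (hs : s.Infinite) : ∃ g : ℕ → α, StrictMono g ∧ ∀ n, g n ∈ s := by
  classical
  have wf : WellFounded ((· < ·) : α → α → Prop) := wellFounded_lt
  let step : {t : Set α // t.Infinite} → {t : Set α // t.Infinite} :=
    fun t => ⟨t.1 \ {wf.min t.1 t.2.nonempty}, t.2.diff (Set.finite_singleton _)⟩
  let seq : ℕ → {t : Set α // t.Infinite} := fun n => step^[n] ⟨s, hs⟩
  let g : ℕ → α := fun n => wf.min (seq n).1 (seq n).2.nonempty
  have hseq_succ : ∀ n, seq (n + 1) = step (seq n) := by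
    intro n
    simp only [seq, Function.iterate_succ_apply']
  have hg_mem : ∀ n, g n ∈ (seq n).1 := fun n => wf.min_mem _ _
  have hsub : ∀ n, (seq (n + 1)).1 ⊆ (seq n).1 := by
    intro n
    rw [hseq_succ n]
    exact Set.diff_subset
  have hchain : ∀ n m, n ≤ m → (seq m).1 ⊆ (seq n).1 := by
    intro n m h
    induction m with
    | zero =>
      cases Nat.le_zero.mp h
      exact fun x hx => hx
    | succ m ih =>
      rcases Nat.lt_or_ge n (m + 1) with h' | h'
      · exact fun x hx => ih (Nat.lt_succ_iff.mp h') (hsub m hx)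
      · have : n = m + 1 := le_antisymm h h'
        subst this; exact fun x hx => hx
  have hgt : ∀ n, ∀ x ∈ (seq (n + 1)).1, g n < x := by
    intro n x hx
    rw [hseq_succ n] at hx
    rcases hx with ⟨hx1, hx2⟩
    rcases lt_or_ge (g n) x with h | h
    · exact h
    · exfalso
      rcases lt_or_eq_of_le h with h' | h'
      · exact wf.not_lt_min _ hx1 h'
      · exact hx2 (by exact h')
  have hmono : StrictMono g := by
    intro n m hnm
    exact hgt n _ (hchain (n + 1) m hnm (hg_mem m))
  refine ⟨g, hmono, fun n => ?_⟩
  have h0 : (seq n).1 ⊆ s := by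
    have := hchain 0 n (Nat.zero_le n)
    simpa [seq] using this
  exact h0 (hg_mem n)

/-- Erdős–Rado theorem for pairs (with possibly infinitely many colours), in the
form: if `#S` is larger than `2 ^ max #C ℵ₀` then every colouring
`F : S → S → C` admits an infinite sequence on which `F` of increasing pairs is
constant. -/
theorem er_pairs {S C : Type u} (F : S → S → C)
    (hbig : 2 ^ max #C ℵ₀ < #S) :
    ∃ h : ℕ → S, Function.Injective h ∧ ∃ c : C, ∀ n m : ℕ, n < m → F (h n) (h m) = c := by
  classical
  set μ : Cardinal.{u} := max #C ℵ₀ with hμdef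
  have hμ0 : ℵ₀ ≤ μ := le_max_right _ _
  have hCμ : #C ≤ μ := le_max_left _ _
  set κ : Cardinal.{u} := Order.succ μ with hκdef
  have hμκ : μ < κ := Order.lt_succ μ
  set T := κ.ord.ToType with hTdef
  have hTcard : #T = κ := by rw [Cardinal.mk_toType, Cardinal.card_ord]
  have wfS : WellFounded (WellOrderingRel : S → S → Prop) := IsWellFounded.wf
  have wfT : WellFounded ((· < ·) : T → T → Prop) := wellFounded_lt
  -- the trace of an element `b`
  let tr : S → T → S := fun b =>
    wfT.fix fun i ih =>
      if hA : {x : S | ∀ j, ∀ hj : j < i, x ≠ ih j hj ∧ F (ih j hj) x = F (ih j hj) b}.Nonempty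
      then wfS.min _ hA else b
  let AA : S → T → Set S := fun b i =>
    {x : S | ∀ j, ∀ _ : j < i, x ≠ tr b j ∧ F (tr b j) x = F (tr b j) b}
  have trdef : ∀ b i, tr b i = if hA : (AA b i).Nonempty then wfS.min _ hA else b := by
    intro b i
    exact wfT.fix_eq _ i
  have trmem : ∀ b i, (AA b i).Nonempty → tr b i ∈ AA b i := by
    intro b i h
    rw [trdef b i, dif_pos h]
    exact wfS.min_mem _ h
  by_cases hcase : ∃ b, ∀ i : T, (AA b i).Nonempty
  · -- a long trace exists: extract an infinite homogeneous sequence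
    obtain ⟨b, hb⟩ := hcase
    have key : ∀ i j : T, j < i → tr b i ≠ tr b j ∧ F (tr b j) (tr b i) = F (tr b j) b :=
      fun i j hj => trmem b i (hb i) j hj
    have hinf : Infinite (C ⊕ ULift.{u} ℕ) :=
      Infinite.of_injective Sum.inr Sum.inr_injective
    have hCT : #(C ⊕ ULift.{u} ℕ) < #T := by
      rw [hTcard]
      refine lt_of_le_of_lt ?_ hμκ
      have h1 : #(C ⊕ ULift.{u} ℕ) = #C + ℵ₀ := by simp
      rw [h1]
      calc #C + ℵ₀ ≤ μ + μ := add_le_add hCμ hμ0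
        _ = μ := Cardinal.add_eq_self hμ0
    obtain ⟨ct, hct⟩ := Cardinal.exists_infinite_fiber'
      (fun i : T => (Sum.inl (F (tr b i) b) : C ⊕ ULift.{u} ℕ)) hCT
    have hctS : ((fun i : T => (Sum.inl (F (tr b i) b) : C ⊕ ULift.{u} ℕ)) ⁻¹' {ct}).Infinite :=
      Set.infinite_coe_iff.mp hct
    obtain ⟨g, hgmono, hgmem⟩ := exists_mono_seq hctS
    have hc0 : (Sum.inl (F (tr b (g 0)) b) : C ⊕ ULift.{u} ℕ) = ct := hgmem 0
    have hcval : ∀ n, F (tr b (g n)) b = F (tr b (g 0)) b := by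
      intro n
      have h1 : (Sum.inl (F (tr b (g n)) b) : C ⊕ ULift.{u} ℕ) = ct := hgmem n
      exact Sum.inl_injective (h1.trans hc0.symm)
    refine ⟨fun n => tr b (g n), ?_, F (tr b (g 0)) b, ?_⟩
    · intro n m hnm
      by_contra hne
      rcases Nat.lt_or_ge n m with h | h
      · exact (key (g m) (g n) (hgmono h)).1 hnm.symm
      · rcases Nat.lt_or_ge m n with h' | h'
        · exact (key (g n) (g m) (hgmono h')).1 hnm
        · exact hne (le_antisymm h' h)
    · intro n m hnm
      rw [(key (g m) (g n) (hgmono hnm)).2, hcval n]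
  · -- all traces die: counting contradiction
    exfalso
    have hstop : ∀ b, {i : T | ¬(AA b i).Nonempty}.Nonempty := by
      intro b
      have hb : ¬∀ i : T, (AA b i).Nonempty := fun h => hcase ⟨b, h⟩
      obtain ⟨i, hi⟩ := not_forall.mp hb
      exact ⟨i, hi⟩
    let L : S → T := fun b => wfT.min {i | ¬(AA b i).Nonempty} (hstop b)
    have hL1 : ∀ b, ¬(AA b (L b)).Nonempty := fun b => wfT.min_mem _ (hstop b)
    have hL2 : ∀ b, ∀ j, j < L b → (AA b j).Nonempty := by
      intro b j hj
      by_contra h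
      exact wfT.not_lt_min {i | ¬(AA b i).Nonempty} h hj
    have hpos : ∀ b, ∃ j, j < L b ∧ tr b j = b := by
      intro b
      by_contra h
      push_neg at h
      apply hL1 b
      refine ⟨b, fun j hj => ⟨?_, rfl⟩⟩
      exact fun he => (h j hj) he.symm
    let P : S → T := fun b => Classical.choose (hpos b)
    have hP1 : ∀ b, P b < L b := fun b => (Classical.choose_spec (hpos b)).1
    have hP2 : ∀ b, tr b (P b) = b := fun b => (Classical.choose_spec (hpos b)).2
    -- injective coding map
    let Ψ : S → T × (T → Option C) × T :=
      fun b => (L b, fun j => if j < L b then some (F (tr b j) b) else none, P b)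
    have hΨinj : Function.Injective Ψ := by
      intro b b' he
      have h1 : L b = L b' := congrArg Prod.fst he
      have h2 : (fun j => if j < L b then some (F (tr b j) b) else none) =
          (fun j => if j < L b' then some (F (tr b' j) b') else none) :=
        congrArg (fun p => p.2.1) he
      have h3 : P b = P b' := congrArg (fun p => p.2.2) he
      have hcol : ∀ j, j < L b → F (tr b j) b = F (tr b' j) b' := by
        intro j hj
        have := congrFun h2 j
        rw [if_pos hj, if_pos (h1 ▸ hj)] at this
        exact Option.some_injective _ this
      have htreq : ∀ j, j < L b → tr b j = tr b' j := by
        intro j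
        induction j using wfT.induction with
        | _ j ih =>
          intro hj
          have hAAeq : AA b j = AA b' j := by
            ext x
            constructor
            · intro hx j' hj'
              have hj'L : j' < L b := lt_trans hj' hj
              have e1 : tr b j' = tr b' j' := ih j' hj' hj'L
              obtain ⟨e2a, e2b⟩ := hx j' hj'
              have hc : F (tr b j') b = F (tr b' j') b' := hcol j' hj'L
              rw [← e1] at hc ⊢
              exact ⟨e2a, e2b.trans hc⟩
            · intro hx j' hj'
              have hj'L : j' < L b := lt_trans hj' hj
              have e1 : tr b j' = tr b' j' := ih j' hj' hj'L
              obtain ⟨e2a, e2b⟩ := hx j' hj'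
              have hc : F (tr b j') b = F (tr b' j') b' := hcol j' hj'L
              rw [← e1] at hc e2a e2b
              exact ⟨e2a, e2b.trans hc.symm⟩
          rw [trdef b j, trdef b' j]
          rw [dif_pos (hL2 b j hj), dif_pos (hL2 b' j (h1 ▸ hj))]
          congr 1
      calc b = tr b (P b) := (hP2 b).symm
        _ = tr b' (P b) := htreq (P b) (hP1 b)
        _ = tr b' (P b') := by rw [h3]
        _ = b' := hP2 b'
    -- the range of Ψ is covered by a small sigma type
    let D : Type u := Σ i : T, ((Set.Iio i → C) × Set.Iio i)
    let θ : D → T × (T → Option C) × T :=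
      fun d => (d.1, fun j => if h : j < d.1 then some (d.2.1 ⟨j, h⟩) else none, d.2.2.1)
    have hsub : Set.range Ψ ⊆ Set.range θ := by
      rintro _ ⟨b, rfl⟩
      refine ⟨⟨L b, fun j => F (tr b j.1) b, ⟨P b, hP1 b⟩⟩, ?_⟩
      simp only [θ, Ψ]
      refine Prod.ext rfl (Prod.ext ?_ rfl)
      funext j
      by_cases h : j < L b
      · simp [h]
      · simp [h]
    have hcount : #S ≤ #D := by
      calc #S = #(Set.range Ψ) := (Cardinal.mk_range_eq Ψ hΨinj).symm
        _ ≤ #(Set.range θ) := Cardinal.mk_le_mk_of_subset hsub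
        _ ≤ #D := Cardinal.mk_range_le
    -- bound #D
    have hDcard : #D ≤ 2 ^ μ := by
      have h2μ : ℵ₀ ≤ 2 ^ μ := hμ0.trans (Cardinal.cantor μ).le
      have hIio : ∀ i : T, #(Set.Iio i) ≤ μ := by
        intro i
        have h1 : #(Set.Iio i) < κ := Cardinal.mk_Iio_ord_toType i
        have h2 : #(Set.Iio i) < Order.succ μ := lt_of_lt_of_eq h1 hκdef
        exact Order.lt_succ_iff.mp h2
      have hterm : ∀ i : T, #((Set.Iio i → C) × Set.Iio i) ≤ 2 ^ μ := by
        intro i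
        have harrow : #(Set.Iio i → C) ≤ 2 ^ μ := by
          rw [← Cardinal.power_def]
          calc #C ^ #(Set.Iio i) ≤ μ ^ #(Set.Iio i) :=
                Cardinal.power_le_power_right hCμ
            _ ≤ μ ^ μ := by
                apply Cardinal.power_le_power_left
                · exact (lt_of_lt_of_le Cardinal.aleph0_pos hμ0).ne'
                · exact hIio i
            _ = 2 ^ μ := Cardinal.power_self_eq hμ0
        have e2 : #((Set.Iio i → C) × Set.Iio i) = #(Set.Iio i → C) * #(Set.Iio i) := by
          simp
        rw [e2]
        calc #(Set.Iio i → C) * #(Set.Iio i) ≤ (2 ^ μ) * (2 ^ μ) :=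
              mul_le_mul' harrow ((hIio i).trans (Cardinal.cantor μ).le)
          _ = 2 ^ μ := Cardinal.mul_eq_self h2μ
      calc #D = Cardinal.sum (fun i : T => #((Set.Iio i → C) × Set.Iio i)) := Cardinal.mk_sigma _
        _ ≤ Cardinal.sum (fun _ : T => 2 ^ μ) := Cardinal.sum_le_sum _ _ hterm
        _ = #T * 2 ^ μ := Cardinal.sum_const' T (2 ^ μ)
        _ ≤ (2 ^ μ) * (2 ^ μ) := by
            apply mul_le_mul'
            · rw [hTcard, hκdef]
              exact Order.succ_le_of_lt (Cardinal.cantor μ)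
            · exact le_rfl
        _ = 2 ^ μ := Cardinal.mul_eq_self h2μ
    exact absurd (hcount.trans hDcard) (not_le.mpr hbig)


/-- Iterated homogenization over finitely many "zones". Each zone is so large
(in terms of beth numbers) that Erdős–Rado for pairs applies with colour set
the function space over the choices in the remaining zones. -/
theorem zones {P : Type} [Finite P] [Nonempty P] :
    ∀ (m : ℕ) (W : Fin m → Type),
      (∀ l : Fin m, #(W l) = Cardinal.beth ((4 * (m - (l : ℕ)) + 4 : ℕ) : Ordinal)) →
      ∀ G : (∀ l, W l × W l) → P,
      ∃ h : ∀ l : Fin m, ℕ → W l, (∀ l, Function.Injective (h l)) ∧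
        ∃ p : P, ∀ sel : Fin m → ℕ × ℕ, (∀ l, (sel l).1 < (sel l).2) →
          G (fun l => (h l (sel l).1, h l (sel l).2)) = p := by
  intro m
  induction m with
  | zero =>
    intro W hW G
    refine ⟨fun l => l.elim0, fun l => l.elim0, G (fun l => l.elim0), fun sel hsel => ?_⟩
    congr 1
    funext l
    exact l.elim0
  | succ m ih =>
    intro W hW G
    classical
    set W' : Fin m → Type := fun l => W l.succ with hW'def
    have hW' : ∀ l : Fin m, #(W' l) = Cardinal.beth ((4 * (m - (l : ℕ)) + 4 : ℕ) : Ordinal) := by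
      intro l
      have := hW l.succ
      have harg : (4 * (m + 1 - (l.succ : ℕ)) + 4 : ℕ) = (4 * (m - (l : ℕ)) + 4 : ℕ) := by
        have : (l.succ : ℕ) = (l : ℕ) + 1 := rfl
        rw [this]
        omega
      rwa [harg] at this
    set C : Type := ((∀ l : Fin m, W' l × W' l) → P) with hCdef
    set F : W 0 → W 0 → C := fun x y => fun rest => G (Fin.cases (x, y) rest) with hFdef
    -- cardinal bound
    have bsucc : ∀ n : ℕ, Cardinal.beth (((n + 1 : ℕ)) : Ordinal) =
        2 ^ Cardinal.beth ((n : ℕ) : Ordinal) := by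
      intro n
      have h1 : (((n + 1 : ℕ)) : Ordinal) = Order.succ ((n : ℕ) : Ordinal) := by
        rw [Nat.cast_succ, Ordinal.add_one_eq_succ]
      rw [h1, Cardinal.beth_succ]
    set B : Cardinal := Cardinal.beth ((4 * m + 4 : ℕ) : Ordinal) with hBdef
    have hB : ℵ₀ ≤ B := Cardinal.aleph0_le_beth _
    have htail : ∀ l : Fin m, #(W' l) ≤ B := by
      intro l
      rw [hW' l, hBdef]
      apply Cardinal.beth_mono
      have : (4 * (m - (l : ℕ)) + 4 : ℕ) ≤ (4 * m + 4 : ℕ) := by omega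
      exact_mod_cast Nat.cast_le.mpr this
    have step1 : #(∀ l : Fin m, W' l × W' l) ≤ (2 : Cardinal) ^ B := by
      have h1 : #(∀ l : Fin m, W' l × W' l) = Cardinal.prod (fun l => #(W' l × W' l)) :=
        Cardinal.mk_pi _
      have h2 : ∀ l : Fin m, #(W' l × W' l) ≤ B := by
        intro l
        have : #(W' l × W' l) = #(W' l) * #(W' l) := by simp
        rw [this]
        calc #(W' l) * #(W' l) ≤ B * B := mul_le_mul' (htail l) (htail l)
          _ = B := Cardinal.mul_eq_self hB
      calc #(∀ l : Fin m, W' l × W' l) = Cardinal.prod (fun l => #(W' l × W' l)) := h1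
        _ ≤ Cardinal.prod (fun _ : Fin m => B) := Cardinal.prod_le_prod _ _ h2
        _ = B ^ #(Fin m) := Cardinal.prod_const' (Fin m) B
        _ ≤ B ^ B := by
            apply Cardinal.power_le_power_left (lt_of_lt_of_le Cardinal.aleph0_pos hB).ne'
            rw [Cardinal.mk_fin]
            exact le_trans (le_of_lt (Cardinal.nat_lt_aleph0 m)) hB
        _ = 2 ^ B := Cardinal.power_self_eq hB
    have step2 : #C ≤ (2 : Cardinal) ^ ((2 : Cardinal) ^ B) := by
      have h2B : ℵ₀ ≤ (2 : Cardinal) ^ B := hB.trans (Cardinal.cantor B).le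
      have h1 : #C = #P ^ #(∀ l : Fin m, W' l × W' l) := (Cardinal.power_def _ _).symm
      rw [h1]
      calc #P ^ #(∀ l : Fin m, W' l × W' l)
          ≤ ℵ₀ ^ #(∀ l : Fin m, W' l × W' l) :=
            Cardinal.power_le_power_right (Cardinal.mk_le_aleph0)
        _ ≤ ℵ₀ ^ ((2 : Cardinal) ^ B) :=
            Cardinal.power_le_power_left Cardinal.aleph0_ne_zero step1
        _ ≤ ((2 : Cardinal) ^ B) ^ ((2 : Cardinal) ^ B) := Cardinal.power_le_power_right h2B
        _ = (2 : Cardinal) ^ (B * ((2 : Cardinal) ^ B)) := (Cardinal.power_mul).symm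
        _ = (2 : Cardinal) ^ ((2 : Cardinal) ^ B) := by
            congr 1
            rw [Cardinal.mul_eq_max hB h2B]
            exact max_eq_right (Cardinal.cantor B).le
    have hbig : (2 : Cardinal) ^ max #C ℵ₀ < #(W 0) := by
      have hmax : max #C ℵ₀ ≤ (2 : Cardinal) ^ ((2 : Cardinal) ^ B) := by
        apply max_le step2
        exact hB.trans ((Cardinal.cantor B).le.trans (Cardinal.cantor ((2 : Cardinal) ^ B)).le)
      have h1 : (2 : Cardinal) ^ max #C ℵ₀ ≤
          (2 : Cardinal) ^ ((2 : Cardinal) ^ ((2 : Cardinal) ^ B)) := by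
        apply Cardinal.power_le_power_left two_ne_zero
        exact hmax
      have hW0 : #(W 0) = Cardinal.beth ((4 * m + 8 : ℕ) : Ordinal) := by
        have := hW 0
        have harg : (4 * (m + 1 - ((0 : Fin (m+1)) : ℕ)) + 4 : ℕ) = (4 * m + 8 : ℕ) := by
          rw [Fin.val_zero]
          omega
        rwa [harg] at this
      have hbeth : (2 : Cardinal) ^ ((2 : Cardinal) ^ ((2 : Cardinal) ^ B)) =
          Cardinal.beth ((4 * m + 7 : ℕ) : Ordinal) := by
        have hb1 : (2 : Cardinal) ^ B = Cardinal.beth ((4 * m + 5 : ℕ) : Ordinal) := by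
          have h := (bsucc (4 * m + 4)).symm
          have harg : (4 * m + 4 + 1 : ℕ) = (4 * m + 5 : ℕ) := by omega
          rw [harg] at h
          rw [hBdef]
          exact h
        have hb2 : (2 : Cardinal) ^ ((2 : Cardinal) ^ B) =
            Cardinal.beth ((4 * m + 6 : ℕ) : Ordinal) := by
          rw [hb1]
          have h := (bsucc (4 * m + 5)).symm
          have harg : (4 * m + 5 + 1 : ℕ) = (4 * m + 6 : ℕ) := by omega
          rw [harg] at h
          exact h
        rw [hb2]
        have h := (bsucc (4 * m + 6)).symm
        have harg : (4 * m + 6 + 1 : ℕ) = (4 * m + 7 : ℕ) := by omega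
        rw [harg] at h
        exact h
      rw [hW0]
      calc (2 : Cardinal) ^ max #C ℵ₀
          ≤ (2 : Cardinal) ^ ((2 : Cardinal) ^ ((2 : Cardinal) ^ B)) := h1
        _ = Cardinal.beth ((4 * m + 7 : ℕ) : Ordinal) := hbeth
        _ < Cardinal.beth ((4 * m + 8 : ℕ) : Ordinal) := by
            apply Cardinal.beth_lt_beth.mpr
            exact_mod_cast (by omega : (4 * m + 7 : ℕ) < (4 * m + 8 : ℕ))
      -- done
    obtain ⟨h0, h0inj, cb, hcb⟩ := er_pairs F hbig
    obtain ⟨h', h'inj, p, hp⟩ := ih W' hW' cb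
    refine ⟨fun l => Fin.cases h0 h' l, ?_, p, ?_⟩
    · intro l
      refine Fin.cases ?_ ?_ l
      · simpa using h0inj
      · intro i
        simpa using h'inj i
    · intro sel hsel
      have hdec : (fun l : Fin (m+1) =>
            ((Fin.cases h0 h' l : ℕ → W l) (sel l).1, (Fin.cases h0 h' l : ℕ → W l) (sel l).2))
          = Fin.cases (motive := fun l => W l × W l) (h0 (sel 0).1, h0 (sel 0).2)
              (fun l : Fin m => (h' l (sel l.succ).1, h' l (sel l.succ).2)) := by
        funext l
        refine Fin.cases ?_ ?_ l
        · simp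
        · intro i
          simp
      calc G (fun l => ((Fin.cases h0 h' l : ℕ → W l) (sel l).1,
                (Fin.cases h0 h' l : ℕ → W l) (sel l).2))
          = F (h0 (sel 0).1) (h0 (sel 0).2)
              (fun l => (h' l (sel l.succ).1, h' l (sel l.succ).2)) := by rw [hdec]
        _ = cb (fun l => (h' l (sel l.succ).1, h' l (sel l.succ).2)) := by
              rw [hcb _ _ (hsel 0)]
        _ = p := hp (fun l => sel l.succ) (fun l => hsel l.succ)

end LeaderRussellAux

/-- **Theorem 2 (Main Result).** Let `k` be a positive integer. For every colouring of the
rational vector space of dimension `ℶ_ω` (here realised as the finitely supported functions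
`ι →₀ ℚ` for any index type `ι` of cardinality `ℶ_ω`) with `k` colours, there is an infinite
set `X` such that the sumset `X + X` is monochromatic. -/
theorem sumset_monochromatic_of_beth_omega_dim (k : ℕ) (hk : 0 < k)
    (ι : Type) (hι : #ι = Cardinal.beth Ordinal.omega0)
    (c : (ι →₀ ℚ) → Fin k) :
    ∃ X : Set (ι →₀ ℚ), X.Infinite ∧ ∃ i : Fin k, ∀ z ∈ X + X, c z = i := by
  classical
  haveI : Nonempty (Fin k) := ⟨⟨0, hk⟩⟩
  -- zone types
  set W : Fin k → Type := fun l => (Cardinal.beth ((4 * (k - (l : ℕ)) + 4 : ℕ) : Ordinal)).out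
    with hWdef
  have hW : ∀ l : Fin k, #(W l) = Cardinal.beth ((4 * (k - (l : ℕ)) + 4 : ℕ) : Ordinal) :=
    fun l => Cardinal.mk_out _
  -- embed the disjoint union of the zones into ι
  have hSig : #(Σ l : Fin k, W l) ≤ #ι := by
    rw [hι]
    calc #(Σ l : Fin k, W l) = Cardinal.sum (fun l : Fin k => #(W l)) := Cardinal.mk_sigma _
      _ ≤ Cardinal.sum (fun _ : Fin k => Cardinal.beth ((4 * k + 4 : ℕ) : Ordinal)) := by
          apply Cardinal.sum_le_sum
          intro l
          rw [hW l]
          apply Cardinal.beth_mono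
          exact_mod_cast (by omega : (4 * (k - (l : ℕ)) + 4 : ℕ) ≤ (4 * k + 4 : ℕ))
      _ = #(Fin k) * Cardinal.beth ((4 * k + 4 : ℕ) : Ordinal) := Cardinal.sum_const' _ _
      _ ≤ Cardinal.beth ((4 * k + 4 : ℕ) : Ordinal) * Cardinal.beth ((4 * k + 4 : ℕ) : Ordinal) := by
          apply mul_le_mul' _ le_rfl
          rw [Cardinal.mk_fin]
          exact (Cardinal.nat_lt_aleph0 k).le.trans (Cardinal.aleph0_le_beth _)
      _ = Cardinal.beth ((4 * k + 4 : ℕ) : Ordinal) := Cardinal.mul_eq_self (Cardinal.aleph0_le_beth _)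
      _ ≤ Cardinal.beth Ordinal.omega0 := by
          apply Cardinal.beth_mono
          exact (Ordinal.nat_lt_omega0 _).le
  obtain ⟨e⟩ := (Cardinal.le_def _ _).mp hSig
  -- profile vectors
  set V : Fin (k + 1) → (∀ l : Fin k, W l × W l) → (ι →₀ ℚ) := fun j ch =>
    ∑ l : Fin k,
      if (l : ℕ) < (j : ℕ)
      then Finsupp.single (e ⟨l, (ch l).1⟩) (2⁻¹ : ℚ) + Finsupp.single (e ⟨l, (ch l).2⟩) (2⁻¹ : ℚ)
      else Finsupp.single (e ⟨l, (ch l).1⟩) (1 : ℚ)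
    with hVdef
  set G : (∀ l : Fin k, W l × W l) → (Fin (k + 1) → Fin k) := fun ch j => c (V j ch) with hGdef
  obtain ⟨h, hinj, φ, hφ⟩ := LeaderRussellAux.zones k W hW G
  -- pigeonhole over the k+1 profiles
  obtain ⟨a, b, hlt, hpeq⟩ : ∃ a b : Fin (k + 1), a < b ∧ φ a = φ b := by
    obtain ⟨p, q, hpq, hf⟩ := Fintype.exists_ne_map_eq_of_card_lt φ (by simp)
    rcases hpq.lt_or_gt with hh | hh
    · exact ⟨p, q, hh, hf⟩
    · exact ⟨q, p, hh, hf.symm⟩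
  have hab' : (a : ℕ) < (b : ℕ) := hlt
  have hak : (a : ℕ) < k := lt_of_lt_of_le hab' (Nat.lt_succ_iff.mp b.isLt)
  -- coordinates
  set E : Fin k → ℕ → ι := fun l t => e ⟨l, h l t⟩ with hEdef
  have hEinj : ∀ l l' t t', E l t = E l' t' → l = l' ∧ t = t' := by
    intro l l' t t' he
    have h1 : (⟨l, h l t⟩ : Σ l, W l) = ⟨l', h l' t'⟩ := e.injective he
    have h2 : l = l' := congrArg Sigma.fst h1
    subst h2
    have h3 : h l t = h l t' := by
      have h4 := (Sigma.ext_iff.mp h1).2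
      exact eq_of_heq h4
    exact ⟨rfl, hinj l h3⟩
  -- the family
  set x : ℕ → (ι →₀ ℚ) := fun n =>
    ∑ l : Fin k,
      if (l : ℕ) < (a : ℕ)
      then Finsupp.single (E l 0) (4⁻¹ : ℚ) + Finsupp.single (E l 1) (4⁻¹ : ℚ)
      else if (l : ℕ) < (b : ℕ)
        then Finsupp.single (E l (n + 2)) (2⁻¹ : ℚ)
        else Finsupp.single (E l 0) (2⁻¹ : ℚ)
    with hxdef
  -- algebra helpers
  have quarter : ∀ p q : ι,
      (Finsupp.single p (4⁻¹ : ℚ) + Finsupp.single q (4⁻¹ : ℚ)) +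
        (Finsupp.single p (4⁻¹ : ℚ) + Finsupp.single q (4⁻¹ : ℚ)) =
      Finsupp.single p (2⁻¹ : ℚ) + Finsupp.single q (2⁻¹ : ℚ) := by
    intro p q
    have h1 : (2⁻¹ : ℚ) = 4⁻¹ + 4⁻¹ := by norm_num
    rw [h1, Finsupp.single_add, Finsupp.single_add]
    abel
  have halfd : ∀ p : ι,
      Finsupp.single p (2⁻¹ : ℚ) + Finsupp.single p (2⁻¹ : ℚ) = Finsupp.single p (1 : ℚ) := by
    intro p
    rw [← Finsupp.single_add]
    norm_num
  -- doubles land in profile a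
  have hcd : ∀ n : ℕ, c (x n + x n) = φ a := by
    intro n
    have hsel : ∀ l : Fin k,
        ((fun l : Fin k => if (l : ℕ) < (a : ℕ) then ((0 : ℕ), (1 : ℕ))
          else if (l : ℕ) < (b : ℕ) then (n + 2, n + 3) else (0, 1)) l).1 <
        ((fun l : Fin k => if (l : ℕ) < (a : ℕ) then ((0 : ℕ), (1 : ℕ))
          else if (l : ℕ) < (b : ℕ) then (n + 2, n + 3) else (0, 1)) l).2 := by
      intro l
      by_cases hla : (l : ℕ) < (a : ℕ)
      · simp [hla]
      · by_cases hlb : (l : ℕ) < (b : ℕ) <;> simp [hla, hlb]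
    have hveq : x n + x n =
        V a (fun l => (h l ((if (l : ℕ) < (a : ℕ) then ((0 : ℕ), (1 : ℕ))
            else if (l : ℕ) < (b : ℕ) then (n + 2, n + 3) else (0, 1))).1,
          h l ((if (l : ℕ) < (a : ℕ) then ((0 : ℕ), (1 : ℕ))
            else if (l : ℕ) < (b : ℕ) then (n + 2, n + 3) else (0, 1))).2)) := by
      rw [hxdef, hVdef]
      rw [← Finset.sum_add_distrib]
      apply Finset.sum_congr rfl
      intro l _
      by_cases hla : (l : ℕ) < (a : ℕ)
      · simp only [hla, if_true]
        exact quarter _ _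
      · have hnla : ¬ (l : ℕ) < (a : ℕ) := hla
        by_cases hlb : (l : ℕ) < (b : ℕ)
        · simp only [hla, hlb, if_true, if_false]
          exact halfd _
        · simp only [hla, hlb, if_false]
          exact halfd _
    rw [hveq]
    have := hφ (fun l : Fin k => if (l : ℕ) < (a : ℕ) then ((0 : ℕ), (1 : ℕ))
      else if (l : ℕ) < (b : ℕ) then (n + 2, n + 3) else (0, 1)) hsel
    exact congrFun this a
  -- distinct pairs land in profile b
  have hcp : ∀ n m : ℕ, n < m → c (x n + x m) = φ b := by
    intro n m hnm
    have hsel : ∀ l : Fin k,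
        ((fun l : Fin k => if (l : ℕ) < (a : ℕ) then ((0 : ℕ), (1 : ℕ))
          else if (l : ℕ) < (b : ℕ) then (n + 2, m + 2) else (0, 1)) l).1 <
        ((fun l : Fin k => if (l : ℕ) < (a : ℕ) then ((0 : ℕ), (1 : ℕ))
          else if (l : ℕ) < (b : ℕ) then (n + 2, m + 2) else (0, 1)) l).2 := by
      intro l
      by_cases hla : (l : ℕ) < (a : ℕ)
      · simp [hla]
      · by_cases hlb : (l : ℕ) < (b : ℕ) <;> simp [hla, hlb] <;> omega
    have hveq : x n + x m =
        V b (fun l => (h l ((if (l : ℕ) < (a : ℕ) then ((0 : ℕ), (1 : ℕ))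
            else if (l : ℕ) < (b : ℕ) then (n + 2, m + 2) else (0, 1))).1,
          h l ((if (l : ℕ) < (a : ℕ) then ((0 : ℕ), (1 : ℕ))
            else if (l : ℕ) < (b : ℕ) then (n + 2, m + 2) else (0, 1))).2)) := by
      rw [hxdef, hVdef]
      rw [← Finset.sum_add_distrib]
      apply Finset.sum_congr rfl
      intro l _
      by_cases hla : (l : ℕ) < (a : ℕ)
      · have hlb : (l : ℕ) < (b : ℕ) := lt_trans hla hab'
        simp only [hla, hlb, if_true]
        exact quarter _ _
      · by_cases hlb : (l : ℕ) < (b : ℕ)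
        · simp only [hla, hlb, if_true, if_false]
          rfl
        · simp only [hla, hlb, if_false]
          exact halfd _
    rw [hveq]
    have := hφ (fun l : Fin k => if (l : ℕ) < (a : ℕ) then ((0 : ℕ), (1 : ℕ))
      else if (l : ℕ) < (b : ℕ) then (n + 2, m + 2) else (0, 1)) hsel
    exact congrFun this b
  -- injectivity of the family
  set la : Fin k := ⟨(a : ℕ), hak⟩ with hladef
  have hla_not : ¬ ((la : ℕ) < (a : ℕ)) := by simp [hladef]
  have hla_b : (la : ℕ) < (b : ℕ) := by simpa [hladef] using hab'
  have happly : ∀ n : ℕ, ∀ t : ℕ, x n (E la t) =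
      (if (la : ℕ) < (a : ℕ)
        then Finsupp.single (E la 0) (4⁻¹ : ℚ) + Finsupp.single (E la 1) (4⁻¹ : ℚ)
        else if (la : ℕ) < (b : ℕ)
          then Finsupp.single (E la (n + 2)) (2⁻¹ : ℚ)
          else Finsupp.single (E la 0) (2⁻¹ : ℚ)) (E la t) := by
    intro n t
    rw [hxdef]
    rw [Finsupp.finset_sum_apply]
    apply Finset.sum_eq_single la
    · intro l _ hl
      have hne : ∀ s : ℕ, E l s ≠ E la t := by
        intro s he
        exact hl (hEinj l la s t he).1
      by_cases hla2 : (l : ℕ) < (a : ℕ)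
      · simp only [hla2, if_true, Finsupp.add_apply]
        rw [Finsupp.single_eq_of_ne' (hne 0), Finsupp.single_eq_of_ne' (hne 1)]
        norm_num
      · by_cases hlb2 : (l : ℕ) < (b : ℕ)
        · simp only [hla2, hlb2, if_true, if_false]
          exact Finsupp.single_eq_of_ne' (hne (n + 2))
        · simp only [hla2, hlb2, if_false]
          exact Finsupp.single_eq_of_ne' (hne 0)
    · intro habs
      exact absurd (Finset.mem_univ la) habs
  have hval : ∀ n : ℕ, x n (E la (n + 2)) = 2⁻¹ := by
    intro n
    rw [happly n (n + 2)]
    simp only [hla_not, hla_b, if_true, if_false]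
    exact Finsupp.single_eq_same
  have hval0 : ∀ n m : ℕ, n ≠ m → x m (E la (n + 2)) = 0 := by
    intro n m hnm
    rw [happly m (n + 2)]
    simp only [hla_not, hla_b, if_true, if_false]
    apply Finsupp.single_eq_of_ne'
    intro he
    have := (hEinj la la (m + 2) (n + 2) he).2
    omega
  have xinj : Function.Injective x := by
    intro n m hnm
    by_contra hne
    have h1 : x n (E la (n + 2)) = 2⁻¹ := hval n
    have h2 : x m (E la (n + 2)) = 0 := hval0 n m (fun he => hne he)
    rw [hnm] at h1
    rw [h2] at h1
    norm_num at h1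
  -- conclusion
  refine ⟨Set.range x, Set.infinite_range_of_injective xinj, φ b, ?_⟩
  intro z hz
  rw [Set.mem_add] at hz
  obtain ⟨u, hu, v, hv, rfl⟩ := hz
  obtain ⟨n, rfl⟩ := hu
  obtain ⟨m, rfl⟩ := hv
  rcases lt_trichotomy n m with hh | hh | hh
  · exact hcp n m hh
  · subst hh
    rw [hcd n, hpeq]
  · rw [add_comm]
    exact hcp m n hh
end

section
/- Let r be a non-negative integer and let κ be an infinite cardinal. Suppose the (r+1)-element subsets of a set of cardinality (exp_r(κ))⁺ (the cardinal successor of the r-fold exponential of κ) are coloured with κ colours. Then there is a subset of cardinality κ⁺ all of whose (r+1)-element subsets receive the same colour. -/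
open Cardinal

/-- The `n`-fold iterated exponential of a cardinal: `exp_0 κ = κ`, `exp_{n+1} κ = 2 ^ exp_n κ`. -/
def iterExp (κ : Cardinal) : ℕ → Cardinal
  | 0 => κ
  | n + 1 => 2 ^ iterExp κ n

section ErdosRadoAux

open Set Order

attribute [local instance] Classical.propDecidable

variable {α β : Type}

theorem le_iterExp {κ : Cardinal} (hκ : ℵ₀ ≤ κ) (r : ℕ) : κ ≤ iterExp κ r := by
  induction r with
  | zero => exact le_rfl
  | succ n ih => exact ih.trans (cantor _).le

theorem aleph0_le_iterExp {κ : Cardinal} (hκ : ℵ₀ ≤ κ) (r : ℕ) : ℵ₀ ≤ iterExp κ r :=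
  hκ.trans (le_iterExp hκ r)

/-- The subtype of `n`-element finsets contained in `X`. -/
abbrev erSub (X : Set α) (n : ℕ) := {s : Finset α // ↑s ⊆ X ∧ s.card = n}

noncomputable def erWit [Nonempty α] (c : Finset α → β) (n : ℕ) (X : Set α)
    (g : erSub X n → β) : α :=
  if h : ∃ b : α, b ∉ X ∧ ∀ s : erSub X n, c (insert b s.1) = g s
  then h.choose else Classical.arbitrary α

noncomputable def erStep [Nonempty α] (c : Finset α → β) (n : ℕ) (μ : Cardinal)
    (E : Set α) : Set α :=
  E ∪ ⋃ X : {X : Set α // X ⊆ E ∧ #X ≤ μ}, Set.range (erWit c n X.1)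

theorem erStep_subset [Nonempty α] (c : Finset α → β) (n : ℕ) (μ : Cardinal) (E : Set α) :
    E ⊆ erStep c n μ E := subset_union_left

theorem erSub_card_le {X : Set α} {n : ℕ} {μ : Cardinal} (hμ : ℵ₀ ≤ μ) (hX : #X ≤ μ) :
    #(erSub X n) ≤ μ := by
  classical
  have h1 : #(erSub X n) ≤ #(List ↥X) := by
    refine mk_le_of_injective (f := fun s => (s.1.subtype (· ∈ X)).toList) ?_
    intro s t hst
    have h2 : ∀ u : erSub X n, (u.1.subtype (· ∈ X)).map (Function.Embedding.subtype _) = u.1 := by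
      intro u
      rw [Finset.subtype_map, Finset.filter_true_of_mem (fun x hx => u.2.1 hx)]
    have h3 : s.1.subtype (· ∈ X) = t.1.subtype (· ∈ X) := by
      have := congrArg List.toFinset hst
      simpa [Finset.toList_toFinset] using this
    have := congrArg (Finset.map (Function.Embedding.subtype _)) h3
    rw [h2 s, h2 t] at this
    exact Subtype.ext this
  rcases isEmpty_or_nonempty ↥X with hE | hNE
  · have hsub : Subsingleton (erSub X n) := by
      constructor
      intro s t
      have hs : s.1 = ∅ := Finset.eq_empty_of_forall_notMem fun x hx => hE.false ⟨x, s.2.1 hx⟩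
      have ht : t.1 = ∅ := Finset.eq_empty_of_forall_notMem fun x hx => hE.false ⟨x, t.2.1 hx⟩
      exact Subtype.ext (hs.trans ht.symm)
    exact (le_one_iff_subsingleton.mpr hsub).trans (one_lt_aleph0.le.trans hμ)
  · rw [mk_list_eq_max_mk_aleph0] at h1
    exact h1.trans (max_le hX hμ)

theorem erStep_card_le [Nonempty α] {c : Finset α → β} {n : ℕ} {μ : Cardinal}
    (hμ : ℵ₀ ≤ μ) (hβ : #β ≤ μ) {E : Set α} (hE : #E ≤ 2 ^ μ) :
    #(erStep c n μ E) ≤ 2 ^ μ := by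
  have h2μ : ℵ₀ ≤ (2:Cardinal) ^ μ := hμ.trans (cantor μ).le
  have hXs : #{X : Set α // X ⊆ E ∧ #X ≤ μ} ≤ 2 ^ μ := by
    refine (mk_bounded_subset_le E μ).trans ?_
    calc (max #E ℵ₀) ^ μ ≤ ((2:Cardinal) ^ μ) ^ μ :=
          power_le_power_right (max_le hE h2μ)
      _ = 2 ^ (μ * μ) := by rw [← power_mul]
      _ = 2 ^ μ := by rw [mul_eq_self hμ]
  have hW : ∀ X : {X : Set α // X ⊆ E ∧ #X ≤ μ}, #(Set.range (erWit c n X.1)) ≤ 2 ^ μ := by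
    intro X
    refine mk_range_le.trans ?_
    calc #(erSub X.1 n → β) ≤ μ ^ μ := by
          rw [← power_def]
          calc #β ^ #(erSub X.1 n) ≤ μ ^ #(erSub X.1 n) := power_le_power_right hβ
            _ ≤ μ ^ μ := power_le_power_left (aleph0_pos.trans_le hμ).ne'
                (erSub_card_le hμ X.2.2)
      _ ≤ ((2:Cardinal) ^ μ) ^ μ := power_le_power_right (cantor μ).le
      _ = 2 ^ μ := by rw [← power_mul, mul_eq_self hμ]
  calc #(erStep c n μ E)
      ≤ #E + #(⋃ X : {X : Set α // X ⊆ E ∧ #X ≤ μ}, Set.range (erWit c n X.1)) :=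
        mk_union_le _ _
    _ ≤ 2 ^ μ + 2 ^ μ * (2 ^ μ) :=
        add_le_add hE ((mk_iUnion_le _).trans (mul_le_mul' hXs (ciSup_le' hW)))
    _ = 2 ^ μ := by rw [mul_eq_self h2μ, add_eq_self h2μ]

theorem erStep_spec [Nonempty α] {c : Finset α → β} {n : ℕ} {μ : Cardinal} {E X : Set α}
    (hXE : X ⊆ E) (hX : #X ≤ μ) {a : α} (ha : a ∉ X) :
    ∃ b ∈ erStep c n μ E, b ∉ X ∧
      ∀ s : Finset α, ↑s ⊆ X → s.card = n → c (insert b s) = c (insert a s) := by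
  set g : erSub X n → β := fun s => c (insert a s.1) with hg
  have hex : ∃ b : α, b ∉ X ∧ ∀ s : erSub X n, c (insert b s.1) = g s := ⟨a, ha, fun s => rfl⟩
  have hb : erWit c n X g ∉ X ∧ ∀ s : erSub X n, c (insert (erWit c n X g) s.1) = g s := by
    rw [erWit, dif_pos hex]
    exact hex.choose_spec
  refine ⟨erWit c n X g, ?_, hb.1, fun s hs hcard => hb.2 ⟨s, hs, hcard⟩⟩
  exact Set.mem_union_right _ (Set.mem_iUnion.mpr ⟨⟨X, hXE, hX⟩, Set.mem_range_self g⟩)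

noncomputable def erChain (step : Set α → Set α) {c : Cardinal} : c.ord.ToType → Set α
  | ξ => step (⋃ η : Set.Iio ξ, erChain step η.1)
  termination_by ξ => ξ
  decreasing_by exact η.2

noncomputable def erSeq {c : Cardinal} (F : Set α → α) : c.ord.ToType → α
  | ξ => F (Set.range fun η : Set.Iio ξ => erSeq F η.1)
  termination_by ξ => ξ
  decreasing_by exact η.2

theorem erIio_card_le {μ : Cardinal.{0}} (ξ : (Order.succ μ).ord.ToType) :
    #(Set.Iio ξ) ≤ μ :=
  Order.lt_succ_iff.mp (Cardinal.mk_Iio_ord_toType ξ)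

theorem erBounded {μ : Cardinal.{0}} (hμ : ℵ₀ ≤ μ) (S : Set ((Order.succ μ).ord.ToType))
    (hS : #S ≤ μ) : ∃ ζ, ∀ w ∈ S, w < ζ := by
  have hreg := Cardinal.isRegular_succ hμ
  by_contra hcon
  push_neg at hcon
  have h := Order.cof_le (s := S) (fun a => hcon a)
  rw [Ordinal.cof_toType, hreg.cof_eq] at h
  exact (Order.lt_succ μ).not_ge (h.trans hS)

/-- Existence of a "closed" set `D` of size at most `2 ^ μ`: every colour type over a small
subset of `D` which is realized in `α` is realized in `D`. -/
theorem erClosure [Nonempty α] (c : Finset α → β) (n : ℕ) {μ : Cardinal.{0}} (hμ : ℵ₀ ≤ μ)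
    (hβ : #β ≤ μ) :
    ∃ D : Set α, #D ≤ 2 ^ μ ∧ ∀ X : Set α, X ⊆ D → #X ≤ μ → ∀ a : α, a ∉ X →
      ∃ b ∈ D, b ∉ X ∧ ∀ s : Finset α, ↑s ⊆ X → s.card = n →
        c (insert b s) = c (insert a s) := by
  set W := (Order.succ μ).ord.ToType with hW
  set ch : W → Set α := erChain (erStep c n μ) with hch
  have hcard : ∀ ξ : W, #(ch ξ) ≤ 2 ^ μ := by
    intro ξ
    induction ξ using WellFoundedLT.induction with
    | ind ξ ih =>
      have : ch ξ = erStep c n μ (⋃ η : Set.Iio ξ, ch η.1) := by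
        rw [hch, erChain]
      rw [this]
      refine erStep_card_le hμ hβ ?_
      have h2μ : ℵ₀ ≤ (2:Cardinal) ^ μ := hμ.trans (cantor μ).le
      calc #(⋃ η : Set.Iio ξ, ch η.1) ≤ #(Set.Iio ξ) * ⨆ η : Set.Iio ξ, #(ch η.1) :=
            mk_iUnion_le _
        _ ≤ 2 ^ μ * 2 ^ μ := mul_le_mul' ((erIio_card_le ξ).trans (cantor μ).le)
            (ciSup_le' fun η => ih η.1 η.2)
        _ = 2 ^ μ := mul_eq_self h2μ
  refine ⟨⋃ ξ : W, ch ξ, ?_, ?_⟩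
  · calc #(⋃ ξ : W, ch ξ) ≤ #W * ⨆ ξ : W, #(ch ξ) := mk_iUnion_le _
      _ ≤ 2 ^ μ * 2 ^ μ := by
          refine mul_le_mul' ?_ (ciSup_le' hcard)
          rw [hW, Cardinal.mk_toType, card_ord]
          exact succ_le_of_lt (cantor μ)
      _ = 2 ^ μ := mul_eq_self (hμ.trans (cantor μ).le)
  · intro X hXD hX a ha
    have hpick : ∀ x : X, ∃ ξ : W, (x : α) ∈ ch ξ := fun x => Set.mem_iUnion.mp (hXD x.2)
    choose f hf using hpick
    obtain ⟨ζ, hζ⟩ := erBounded hμ (Set.range f) ((mk_range_le).trans (hX.trans_eq rfl))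
    have hXE : X ⊆ ⋃ η : Set.Iio ζ, ch η.1 := by
      intro x hx
      exact Set.mem_iUnion.mpr ⟨⟨f ⟨x, hx⟩, hζ _ (Set.mem_range_self _)⟩, hf ⟨x, hx⟩⟩
    obtain ⟨b, hb1, hb2, hb3⟩ := erStep_spec (c := c) (n := n) (μ := μ) hXE hX ha
    refine ⟨b, ?_, hb2, hb3⟩
    have : erStep c n μ (⋃ η : Set.Iio ζ, ch η.1) = ch ζ := by rw [hch, erChain]
    rw [this] at hb1
    exact Set.mem_iUnion.mpr ⟨ζ, hb1⟩

/-- From a closed set `D` and a point `a ∉ D`, construct an injective end-homogeneous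
sequence of length `μ⁺`. -/
theorem erSeq_spec [Nonempty α] {c : Finset α → β} {n : ℕ} {μ : Cardinal.{0}} {D : Set α}
    (hD : ∀ X : Set α, X ⊆ D → #X ≤ μ → ∀ a : α, a ∉ X →
      ∃ b ∈ D, b ∉ X ∧ ∀ s : Finset α, ↑s ⊆ X → s.card = n →
        c (insert b s) = c (insert a s))
    {a : α} (ha : a ∉ D) :
    ∃ x : (Order.succ μ).ord.ToType → α, Function.Injective x ∧
      ∀ ξ, ∀ s : Finset α, (↑s : Set α) ⊆ (Set.range fun η : Set.Iio ξ => x η.1) →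
        s.card = n → c (insert (x ξ) s) = c (insert a s) := by
  set W := (Order.succ μ).ord.ToType with hWdef
  set F : Set α → α := fun Y =>
    if h : Y ⊆ D ∧ #Y ≤ μ then (hD Y h.1 h.2 a fun h' => ha (h.1 h')).choose
    else Classical.arbitrary α with hF
  set x : W → α := erSeq F with hx
  have key : ∀ ξ : W, x ξ ∈ D ∧ x ξ ∉ (Set.range fun η : Set.Iio ξ => x η.1) ∧
      ∀ s : Finset α, (↑s : Set α) ⊆ (Set.range fun η : Set.Iio ξ => x η.1) → s.card = n →
        c (insert (x ξ) s) = c (insert a s) := by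
    intro ξ
    induction ξ using WellFoundedLT.induction with
    | ind ξ ih =>
      set Y : Set α := Set.range fun η : Set.Iio ξ => x η.1 with hY
      have hYD : Y ⊆ D := by
        rintro y ⟨η, rfl⟩
        exact (ih η.1 η.2).1
      have hYc : #Y ≤ μ := mk_range_le.trans (erIio_card_le ξ)
      have hxξ : x ξ = F Y := by rw [hx, erSeq]
      have hcond : Y ⊆ D ∧ #Y ≤ μ := ⟨hYD, hYc⟩
      have hFY : F Y = (hD Y hcond.1 hcond.2 a fun h' => ha (hcond.1 h')).choose := by
        rw [hF]; exact dif_pos hcond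
      have hspec := (hD Y hcond.1 hcond.2 a fun h' => ha (hcond.1 h')).choose_spec
      rw [hxξ, hFY]
      exact ⟨hspec.1, hspec.2.1, fun s hs hc => hspec.2.2 s hs hc⟩
  refine ⟨x, ?_, fun ξ => (key ξ).2.2⟩
  intro η ξ hxy
  by_contra hne
  rcases lt_or_gt_of_ne hne with h | h
  · exact (key ξ).2.1 ⟨⟨η, h⟩, hxy⟩
  · exact (key η).2.1 ⟨⟨ξ, h⟩, hxy.symm⟩

end ErdosRadoAux

/-- **Erdős–Rado theorem.** Let `r` be a non-negative integer and `κ` an infinite cardinal.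
If the `(r+1)`-element subsets of a set of cardinality `(exp_r κ)⁺` are coloured with `κ`
colours, then there is a subset of cardinality `κ⁺` all of whose `(r+1)`-element subsets
receive the same colour. -/
theorem erdos_rado (r : ℕ) (κ : Cardinal) (hκ : ℵ₀ ≤ κ)
    (α β : Type) (hα : #α = Order.succ (iterExp κ r)) (hβ : #β = κ)
    (c : Finset α → β) :
    ∃ H : Set α, #H = Order.succ κ ∧ ∃ i : β,
      ∀ s : Finset α, ↑s ⊆ H → s.card = r + 1 → c s = i := by
  classical
  induction r generalizing α c with
  | zero =>
    -- pigeonhole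
    have hβα : #β < #α := by
      rw [hβ, hα]
      exact Order.lt_succ κ
    have hβinf : ℵ₀ ≤ #β := hβ ▸ hκ
    obtain ⟨i, hi⟩ := Cardinal.infinite_pigeonhole_card_lt (fun a : α => c {a}) hβα (hβinf.trans hβα.le)
    refine ⟨(fun a : α => c {a}) ⁻¹' {i}, ?_, i, ?_⟩
    · refine le_antisymm ?_ ?_
      · have h1 := Cardinal.mk_set_le ((fun a : α => c {a}) ⁻¹' {i})
        rw [hα] at h1
        simpa [iterExp] using h1
      · rw [hβ] at hi
        exact Order.succ_le_of_lt hi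
    · intro s hs hcard
      obtain ⟨b, rfl⟩ := Finset.card_eq_one.mp hcard
      have : b ∈ (fun a : α => c {a}) ⁻¹' {i} := hs (by simp)
      simpa using this
  | succ n ih =>
    set μ : Cardinal := iterExp κ n with hμdef
    have hμinf : ℵ₀ ≤ μ := aleph0_le_iterExp hκ n
    have hα2 : #α = Order.succ (2 ^ μ) := hα
    have hβμ : #β ≤ μ := hβ.le.trans (le_iterExp hκ n)
    have hne : Nonempty α := by
      rw [← Cardinal.mk_ne_zero_iff]
      rw [hα2]
      intro h0
      have : (2:Cardinal) ^ μ < 0 := h0 ▸ Order.lt_succ _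
      exact (Cardinal.zero_le _).not_gt this
    obtain ⟨D, hDcard, hDclosed⟩ := erClosure c (n + 1) hμinf hβμ
    -- pick a point outside D
    have hDne : Dᶜ.Nonempty := by
      rw [Set.nonempty_compl]
      intro hDuniv
      rw [hDuniv, Cardinal.mk_univ, hα2] at hDcard
      exact (Order.lt_succ ((2:Cardinal) ^ μ)).not_ge hDcard
    obtain ⟨a, ha⟩ := hDne
    obtain ⟨x, hxinj, hxhom⟩ := erSeq_spec hDclosed ha
    -- apply the induction hypothesis on the index type
    have hWcard : #((Order.succ μ).ord.ToType) = Order.succ (iterExp κ n) := by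
      rw [Cardinal.mk_toType, Cardinal.card_ord]
    obtain ⟨H', hH'card, i, hH'hom⟩ :=
      ih ((Order.succ μ).ord.ToType) hWcard (fun t => c (insert a (t.image x)))
    refine ⟨x '' H', ?_, i, ?_⟩
    · rw [Cardinal.mk_image_eq hxinj, hH'card]
    · intro s hs hcard
      -- pull s back to a finset t of W
      have hsr : ∀ y ∈ s, y ∈ Set.range x := fun y hy => (hs hy).imp fun η hη => hη.2
      set t : Finset ((Order.succ μ).ord.ToType) := s.preimage x (Set.injOn_of_injective hxinj) with ht
      have htim : t.image x = s := by
        rw [ht, Finset.image_preimage]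
        exact Finset.filter_true_of_mem fun y hy => hsr y hy
      have htsub : ↑t ⊆ H' := by
        intro η hη
        have hxη : x η ∈ s := by
          rw [ht] at hη
          exact (Finset.mem_preimage).mp hη
        obtain ⟨η', hη', heq⟩ := hs hxη
        rwa [← hxinj heq]
      have htcard : t.card = n + 2 := by
        have h := Finset.card_image_of_injective t hxinj
        rw [htim, hcard] at h
        omega
      have htne : t.Nonempty := by
        rw [← Finset.card_pos, htcard]; omega
      set ξ := t.max' htne with hξ
      set t' : Finset ((Order.succ μ).ord.ToType) := t.erase ξ with ht'
      have hξt : ξ ∈ t := t.max'_mem htne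
      have ht'lt : ∀ η ∈ t', η < ξ := fun η hη =>
        lt_of_le_of_ne (t.le_max' η (Finset.mem_of_mem_erase hη)) (Finset.ne_of_mem_erase hη)
      have ht'card : t'.card = n + 1 := by
        rw [ht', Finset.card_erase_of_mem hξt, htcard]
        omega
      have hsplit : s = insert (x ξ) (t'.image x) := by
        calc s = t.image x := htim.symm
          _ = (insert ξ t').image x := by rw [ht', Finset.insert_erase hξt]
          _ = insert (x ξ) (t'.image x) := Finset.image_insert _ _ _
      have hcsub : (↑(t'.image x) : Set α) ⊆ Set.range fun η : Set.Iio ξ => x η.1 := by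
        intro y hy
        obtain ⟨η, hη, rfl⟩ := Finset.mem_image.mp hy
        exact ⟨⟨η, ht'lt η hη⟩, rfl⟩
      have hximcard : (t'.image x).card = n + 1 := by
        rw [Finset.card_image_of_injective t' hxinj, ht'card]
      calc c s = c (insert (x ξ) (t'.image x)) := by rw [← hsplit]
        _ = c (insert a (t'.image x)) := hxhom ξ _ hcsub hximcard
        _ = i := hH'hom t' (fun η hη => htsub (Finset.mem_of_mem_erase hη)) ht'card
end

section
/- For every positive integer r, if the r-element subsets of a set of cardinality ℶ_ω are coloured with finitely many colours, then there is a subset of cardinality ℵ₁ all of whose r-element subsets receive the same colour. -/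
open Cardinal Set Ordinal

namespace ErdosRadoAux

attribute [local instance] Classical.propDecidable

noncomputable section

variable {γ β : Type} (f : Finset γ → β) (κ : Cardinal.{0})

/-- The `f`-type of `u` over `B`. -/
def typ (B : Set γ) (u : γ) : {s : Finset γ // ↑s ⊆ B} → β :=
  fun s => f (insert u s.1)

/-- Pick a realizer of a type outside `B`, if one exists. -/
def pick [Nonempty γ] (B : Set γ) (τ : {s : Finset γ // ↑s ⊆ B} → β) : γ :=
  if h : ∃ u, u ∉ B ∧ typ f B u = τ then h.choose else Classical.arbitrary γ

theorem pick_spec [Nonempty γ] {B : Set γ} {τ : {s : Finset γ // ↑s ⊆ B} → β}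
    (h : ∃ u, u ∉ B ∧ typ f B u = τ) :
    pick f B τ ∉ B ∧ typ f B (pick f B τ) = τ := by
  rw [pick, dif_pos h]; exact h.choose_spec

/-- One-step Skolem hull. -/
def hull [Nonempty γ] (S : Set γ) : Set γ :=
  S ∪ ⋃ (B : {B : Set γ // B ⊆ S ∧ #B ≤ κ}), Set.range (pick f B.1)

theorem subset_hull [Nonempty γ] (S : Set γ) : S ⊆ hull f κ S :=
  Set.subset_union_left

theorem pick_mem_hull [Nonempty γ] {S B : Set γ} (hBS : B ⊆ S) (hB : #B ≤ κ)
    (τ : {s : Finset γ // ↑s ⊆ B} → β) : pick f B τ ∈ hull f κ S :=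
  Set.mem_union_right _ <| Set.mem_iUnion.2 ⟨⟨B, hBS, hB⟩, Set.mem_range_self τ⟩

theorem card_typDomain (hκ : ℵ₀ ≤ κ) {B : Set γ} (hB : #B ≤ κ) :
    #{s : Finset γ // ↑s ⊆ B} ≤ κ := by
  classical
  have hinj : Function.Injective
      (fun s : {s : Finset γ // ↑s ⊆ B} => Finset.subtype (· ∈ B) s.1) := by
    intro s₁ s₂ h
    have e : ∀ s : {s : Finset γ // ↑s ⊆ B},
        (Finset.subtype (· ∈ B) s.1).map (Function.Embedding.subtype _) = s.1 := by
      intro s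
      rw [Finset.subtype_map, Finset.filter_true_of_mem fun x hx => s.2 hx]
    have := congrArg (Finset.map (Function.Embedding.subtype (· ∈ B))) h
    rw [e s₁, e s₂] at this
    exact Subtype.ext this
  refine (Cardinal.mk_le_of_injective hinj).trans ?_
  rcases finite_or_infinite ↥B with hf | hi
  · exact (Cardinal.mk_le_aleph0).trans hκ
  · rw [Cardinal.mk_finset_of_infinite]
    exact hB

theorem card_subsets (hκ : ℵ₀ ≤ κ) {S : Set γ} (hS : #S ≤ 2 ^ κ) :
    #{B : Set γ // B ⊆ S ∧ #B ≤ κ} ≤ 2 ^ κ := by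
  classical
  set K := Quotient.out κ with hK
  have hKcard : #K = κ := Cardinal.mk_out κ
  set e : (K → Option ↥S) → Set γ :=
    fun h => {x : γ | ∃ (k : K) (hx : x ∈ S), h k = some ⟨x, hx⟩} with he
  have heS : ∀ h, e h ⊆ S := by
    rintro h x ⟨k, hx, _⟩; exact hx
  have hecard : ∀ h, #(e h) ≤ κ := by
    intro h
    rw [← hKcard]
    refine Cardinal.mk_le_of_injective (f := fun x : ↥(e h) => x.2.choose) ?_
    intro x y hxy
    simp only at hxy
    obtain ⟨hx, hhx⟩ := x.2.choose_spec
    obtain ⟨hy, hhy⟩ := y.2.choose_spec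
    rw [hxy, hhy] at hhx
    have := congrArg (Option.map Subtype.val) hhx
    simp only [Option.map_some] at this
    injection this with h2
    exact Subtype.ext h2.symm
  have hrange : ∀ B : Set γ, B ⊆ S → #B ≤ κ → ∃ h, e h = B := by
    intro B hBS hB
    rw [← hKcard, Cardinal.le_def] at hB
    obtain ⟨ι⟩ := hB
    refine ⟨fun k => if h : ∃ b : ↥B, ι b = k then some ⟨h.choose.1, hBS h.choose.2⟩ else none, ?_⟩
    ext x
    simp only [he, Set.mem_setOf_eq]
    constructor
    · rintro ⟨k, hx, hk⟩
      by_cases h : ∃ b : ↥B, ι b = k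
      · rw [dif_pos h] at hk
        have := congrArg (Option.map Subtype.val) hk
        simp only [Option.map_some] at this
        injection this with h2
        exact h2 ▸ h.choose.2
      · rw [dif_neg h] at hk; exact absurd hk (by simp)
    · intro hxB
      refine ⟨ι ⟨x, hxB⟩, hBS hxB, ?_⟩
      have h : ∃ b : ↥B, ι b = ι ⟨x, hxB⟩ := ⟨⟨x, hxB⟩, rfl⟩
      rw [dif_pos h]
      have : h.choose = ⟨x, hxB⟩ := ι.injective h.choose_spec
      simp [this]
  have hsurj : Function.Surjective
      (fun h : (K → Option ↥S) =>
        (⟨e h, heS h, hecard h⟩ : {B : Set γ // B ⊆ S ∧ #B ≤ κ})) := by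
    rintro ⟨B, hBS, hB⟩
    obtain ⟨h, hh⟩ := hrange B hBS hB
    exact ⟨h, Subtype.ext hh⟩
  refine (Cardinal.mk_le_of_surjective hsurj).trans ?_
  have : #(K → Option ↥S) = (#S + 1) ^ κ := by
    rw [← Cardinal.power_def, Cardinal.mk_option, hKcard]
  rw [this]
  calc (#S + 1) ^ κ ≤ (2 ^ κ) ^ κ := by
        refine Cardinal.power_le_power_right ?_
        have h2κ : ℵ₀ ≤ 2 ^ κ := hκ.trans (Cardinal.cantor κ).le
        calc #S + 1 ≤ 2 ^ κ + 1 := add_le_add_left hS 1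
          _ = 2 ^ κ := Cardinal.add_one_of_aleph0_le h2κ
    _ = 2 ^ (κ * κ) := by rw [← Cardinal.power_mul]
    _ = 2 ^ κ := by rw [Cardinal.mul_eq_self hκ]

/-- helper: union bound -/
theorem mk_iUnion_le' {α ι : Type} (g : ι → Set α) {c : Cardinal.{0}} (hc : ℵ₀ ≤ c)
    (hι : #ι ≤ c) (hg : ∀ i, #(g i) ≤ c) : #(⋃ i, g i) ≤ c := by
  refine (Cardinal.mk_iUnion_le_sum_mk).trans ?_
  refine (Cardinal.sum_le_sum _ _ hg).trans ?_
  rw [Cardinal.sum_const, Cardinal.lift_id, Cardinal.lift_id]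
  calc #ι * c ≤ c * c := mul_le_mul_left hι c
    _ = c := Cardinal.mul_eq_self hc

theorem card_pickRange [Nonempty γ] [Nonempty β] (hκ : ℵ₀ ≤ κ) (hβ : #β ≤ κ)
    {B : Set γ} (hB : #B ≤ κ) : #(Set.range (pick f B)) ≤ 2 ^ κ := by
  refine (Cardinal.mk_range_le).trans ?_
  have : #({s : Finset γ // ↑s ⊆ B} → β) = #β ^ #{s : Finset γ // ↑s ⊆ B} :=
    (Cardinal.power_def β _).symm
  rw [this]
  calc #β ^ #{s : Finset γ // ↑s ⊆ B}
      ≤ #β ^ κ := by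
        refine Cardinal.power_le_power_left ?_ (card_typDomain κ hκ hB)
        simpa using Cardinal.mk_ne_zero β
    _ ≤ (2 ^ κ) ^ κ := Cardinal.power_le_power_right
        (hβ.trans (Cardinal.cantor κ).le)
    _ = 2 ^ (κ * κ) := by rw [← Cardinal.power_mul]
    _ = 2 ^ κ := by rw [Cardinal.mul_eq_self hκ]

theorem card_hull [Nonempty γ] [Nonempty β] (hκ : ℵ₀ ≤ κ) (hβ : #β ≤ κ)
    {S : Set γ} (hS : #S ≤ 2 ^ κ) : #(hull f κ S) ≤ 2 ^ κ := by
  have h2κ : ℵ₀ ≤ 2 ^ κ := hκ.trans (Cardinal.cantor κ).le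
  refine (Cardinal.mk_union_le _ _).trans ?_
  have h2 : #(⋃ (B : {B : Set γ // B ⊆ S ∧ #B ≤ κ}), Set.range (pick f B.1)) ≤ 2 ^ κ := by
    refine mk_iUnion_le' _ h2κ (card_subsets κ hκ hS) ?_
    intro B
    exact card_pickRange f κ hκ hβ B.2.2
  calc #S + _ ≤ 2 ^ κ + 2 ^ κ := add_le_add hS h2
    _ = 2 ^ κ := Cardinal.add_eq_self h2κ

/-- The index type: a well order of cardinality `κ⁺`. -/
abbrev Idx : Type := (Order.succ κ).ord.ToType

theorem card_Iio_le (hκ : ℵ₀ ≤ κ) (i : Idx κ) : #(Iio i) ≤ κ := by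
  have := Cardinal.mk_Iio_ord_toType i
  exact Order.lt_succ_iff.1 this

theorem card_Idx : #(Idx κ) = Order.succ κ := by
  rw [Cardinal.mk_toType, Cardinal.card_ord]

/-- The increasing chain of hulls. -/
def chain [Nonempty γ] : Idx κ → Set γ :=
  wellFounded_lt.fix fun i rec => hull f κ (⋃ j : Iio i, rec j.1 j.2)

theorem chain_eq [Nonempty γ] (i : Idx κ) :
    chain f κ i = hull f κ (⋃ j : Iio i, chain f κ j.1) := by
  rw [chain, WellFounded.fix_eq]

theorem card_chain [Nonempty γ] [Nonempty β] (hκ : ℵ₀ ≤ κ) (hβ : #β ≤ κ) (i : Idx κ) :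
    #(chain f κ i) ≤ 2 ^ κ := by
  have h2κ : ℵ₀ ≤ 2 ^ κ := hκ.trans (Cardinal.cantor κ).le
  refine wellFounded_lt.induction (C := fun i => #(chain f κ i) ≤ 2 ^ κ) i ?_
  intro i IH
  rw [chain_eq]
  refine card_hull f κ hκ hβ ?_
  refine mk_iUnion_le' _ h2κ ((card_Iio_le κ hκ i).trans (Cardinal.cantor κ).le) ?_
  intro j
  exact IH j.1 j.2

/-- The full hull. -/
def core [Nonempty γ] : Set γ := ⋃ i, chain f κ i

theorem card_core [Nonempty γ] [Nonempty β] (hκ : ℵ₀ ≤ κ) (hβ : #β ≤ κ) :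
    #(core f κ) ≤ 2 ^ κ := by
  refine mk_iUnion_le' _ (hκ.trans (Cardinal.cantor κ).le) ?_ (card_chain f κ hκ hβ)
  rw [card_Idx]
  exact (Order.succ_le_of_lt (Cardinal.cantor κ))

theorem exists_not_mem_core [Nonempty γ] [Nonempty β] (hκ : ℵ₀ ≤ κ) (hβ : #β ≤ κ)
    (hγ : 2 ^ κ < #γ) : ∃ u, u ∉ core f κ := by
  by_contra h
  push_neg at h
  have huniv : core f κ = Set.univ := Set.eq_univ_iff_forall.2 h
  have hcard := card_core f κ hκ hβ
  rw [huniv, Cardinal.mk_univ] at hcard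
  exact absurd hcard (not_le.2 hγ)

/-- Strict upper bounds for small sets in `Idx κ`. -/
theorem exists_ub (hκ : ℵ₀ ≤ κ) (T : Set (Idx κ)) (hT : #T ≤ κ) :
    ∃ i : Idx κ, ∀ j ∈ T, j < i := by
  have hreg : (Order.succ κ).IsRegular := Cardinal.isRegular_succ hκ
  have hlim : Order.IsSuccLimit ((Order.succ κ).ord) :=
    Cardinal.isSuccLimit_ord (hκ.trans (Order.le_succ κ))
  set ρ : Idx κ → Ordinal := fun j => ((Ordinal.ToType.mk (o := (Order.succ κ).ord)).symm j).1 with hρ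
  have hρlt : ∀ j, ρ j < (Order.succ κ).ord := fun j =>
    ((Ordinal.ToType.mk (o := (Order.succ κ).ord)).symm j).2
  have hsup : (⨆ j : T, ρ j.1 + 1) < (Order.succ κ).ord := by
    refine Cardinal.iSup_lt_ord_of_isRegular hreg (hT.trans_lt (Order.lt_succ κ)) ?_
    intro j
    exact hlim.succ_lt (hρlt j.1)
  refine ⟨Ordinal.ToType.mk (o := (Order.succ κ).ord) ⟨_, hsup⟩, ?_⟩
  intro j hj
  have h1 : ρ j + 1 ≤ ⨆ j : T, ρ j.1 + 1 :=
    le_ciSup (Ordinal.bddAbove_range _) (⟨j, hj⟩ : T)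
  have h2 : ρ j < ⨆ j : T, ρ j.1 + 1 := lt_of_lt_of_le (Order.lt_succ _) h1
  have : (Ordinal.ToType.mk (o := (Order.succ κ).ord)).symm j <
      (⟨_, hsup⟩ : Iio (Order.succ κ).ord) := h2
  have := (Ordinal.ToType.mk (o := (Order.succ κ).ord)).lt_iff_lt.2 this
  rwa [OrderIso.apply_symm_apply] at this

theorem chain_subset_core [Nonempty γ] (i : Idx κ) : chain f κ i ⊆ core f κ :=
  Set.subset_iUnion (chain f κ) i

/-- Closure of `core` under realizing types of outside elements over small subsets. -/
theorem closure [Nonempty γ] (hκ : ℵ₀ ≤ κ) {B : Set γ} (hB1 : B ⊆ core f κ)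
    (hB2 : #B ≤ κ) {v : γ} (hv : v ∉ B) :
    ∃ w, (w ∈ core f κ ∧ w ∉ B) ∧ typ f B w = typ f B v := by
  classical
  -- choose indices
  have hidx : ∀ b : ↥B, ∃ i : Idx κ, (b : γ) ∈ chain f κ i := by
    intro b
    have := hB1 b.2
    rwa [core, Set.mem_iUnion] at this
  choose idx hidx using hidx
  obtain ⟨i, hi⟩ := exists_ub κ hκ (Set.range idx) ((Cardinal.mk_range_le).trans hB2)
  have hBU : B ⊆ ⋃ j : Iio i, chain f κ j.1 := by
    intro b hb
    refine Set.mem_iUnion.2 ⟨⟨idx ⟨b, hb⟩, hi _ (Set.mem_range_self _)⟩, hidx ⟨b, hb⟩⟩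
  have hex : ∃ u, u ∉ B ∧ typ f B u = typ f B v := ⟨v, hv, rfl⟩
  obtain ⟨hw1, hw2⟩ := pick_spec f hex
  refine ⟨pick f B (typ f B v), ⟨?_, hw1⟩, hw2⟩
  have : pick f B (typ f B v) ∈ hull f κ (⋃ j : Iio i, chain f κ j.1) :=
    pick_mem_hull f κ hBU hB2 _
  rw [← chain_eq] at this
  exact chain_subset_core f κ i this

section Seq

variable [Nonempty γ] [Nonempty β] (hκ : ℵ₀ ≤ κ) (hβ : #β ≤ κ) (hγ : 2 ^ κ < #γ)

/-- An element outside the hull. -/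
def uElt : γ := (exists_not_mem_core f κ hκ hβ hγ).choose

theorem uElt_spec : uElt f κ hκ hβ hγ ∉ core f κ :=
  (exists_not_mem_core f κ hκ hβ hγ).choose_spec

/-- The set of previously chosen elements. -/
def prevSet (i : Idx κ) (rec : ∀ j : Idx κ, j < i → ↥(core f κ)) : Set γ :=
  Set.range fun j : Iio i => (rec j.1 j.2 : γ)

theorem prevSet_subset (i : Idx κ) (rec : ∀ j : Idx κ, j < i → ↥(core f κ)) :
    prevSet f κ i rec ⊆ core f κ := by
  rintro x ⟨j, rfl⟩
  exact (rec j.1 j.2).2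

include hκ in
theorem prevSet_card (i : Idx κ) (rec : ∀ j : Idx κ, j < i → ↥(core f κ)) :
    #(prevSet f κ i rec) ≤ κ :=
  (Cardinal.mk_range_le).trans (card_Iio_le κ hκ i)

theorem uElt_not_mem_prevSet (i : Idx κ) (rec : ∀ j : Idx κ, j < i → ↥(core f κ)) :
    uElt f κ hκ hβ hγ ∉ prevSet f κ i rec :=
  fun hm => uElt_spec f κ hκ hβ hγ (prevSet_subset f κ i rec hm)

/-- One step of the recursion. -/
def seqBody (i : Idx κ) (rec : ∀ j : Idx κ, j < i → ↥(core f κ)) : ↥(core f κ) :=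
  ⟨(closure f κ hκ (prevSet_subset f κ i rec) (prevSet_card f κ hκ i rec)
      (uElt_not_mem_prevSet f κ hκ hβ hγ i rec)).choose,
    (closure f κ hκ (prevSet_subset f κ i rec) (prevSet_card f κ hκ i rec)
      (uElt_not_mem_prevSet f κ hκ hβ hγ i rec)).choose_spec.1.1⟩

/-- The end-homogeneous sequence. -/
def seq : Idx κ → ↥(core f κ) :=
  wellFounded_lt.fix (seqBody f κ hκ hβ hγ)

theorem seq_eq (i : Idx κ) :
    seq f κ hκ hβ hγ i = seqBody f κ hκ hβ hγ i (fun j _ => seq f κ hκ hβ hγ j) := by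
  rw [seq, WellFounded.fix_eq]

theorem seq_spec (i : Idx κ) :
    ((seq f κ hκ hβ hγ i : γ) ∉ prevSet f κ i (fun j _ => seq f κ hκ hβ hγ j)) ∧
      typ f (prevSet f κ i (fun j _ => seq f κ hκ hβ hγ j)) (seq f κ hκ hβ hγ i) =
        typ f (prevSet f κ i (fun j _ => seq f κ hκ hβ hγ j)) (uElt f κ hκ hβ hγ) := by
  set rec : ∀ j : Idx κ, j < i → ↥(core f κ) := fun j _ => seq f κ hκ hβ hγ j with hrec
  have h := (closure f κ hκ (prevSet_subset f κ i rec) (prevSet_card f κ hκ i rec)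
      (uElt_not_mem_prevSet f κ hκ hβ hγ i rec)).choose_spec
  have e : (seq f κ hκ hβ hγ i : γ) = (closure f κ hκ (prevSet_subset f κ i rec)
      (prevSet_card f κ hκ i rec)
      (uElt_not_mem_prevSet f κ hκ hβ hγ i rec)).choose := by
    rw [seq_eq]
    rfl
  exact ⟨e ▸ h.1.2, e ▸ h.2⟩

theorem mem_prevSet {i j : Idx κ} (hji : j < i) :
    (seq f κ hκ hβ hγ j : γ) ∈ prevSet f κ i (fun j _ => seq f κ hκ hβ hγ j) :=
  ⟨⟨j, hji⟩, rfl⟩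

theorem seq_injective : Function.Injective (fun i => (seq f κ hκ hβ hγ i : γ)) := by
  intro i j hij
  simp only at hij
  rcases lt_trichotomy i j with h | h | h
  · exact absurd (hij ▸ mem_prevSet f κ hκ hβ hγ h) (seq_spec f κ hκ hβ hγ j).1
  · exact h
  · exact absurd (hij ▸ mem_prevSet f κ hκ hβ hγ h) ((hij ▸ (seq_spec f κ hκ hβ hγ i).1))

include hκ hβ hγ in
/-- The stepping-up lemma: an end-homogeneous sequence of length `κ⁺`. -/
theorem step :
    ∃ (a : Idx κ → γ) (u : γ), Function.Injective a ∧
      ∀ (s : Finset (Idx κ)) (i : Idx κ), (∀ j ∈ s, j < i) →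
        f (insert (a i) (s.image a)) = f (insert u (s.image a)) := by
  refine ⟨fun i => (seq f κ hκ hβ hγ i : γ), uElt f κ hκ hβ hγ,
    seq_injective f κ hκ hβ hγ, ?_⟩
  intro s i hs
  have hsub : ↑(s.image fun j => (seq f κ hκ hβ hγ j : γ)) ⊆
      prevSet f κ i (fun j _ => seq f κ hκ hβ hγ j) := by
    intro x hx
    rw [Finset.coe_image] at hx
    obtain ⟨j, hj, rfl⟩ := hx
    exact mem_prevSet f κ hκ hβ hγ (hs j hj)
  have := congrFun (seq_spec f κ hκ hβ hγ i).2
    ⟨s.image fun j => (seq f κ hκ hβ hγ j : γ), hsub⟩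
  simpa [typ] using this

end Seq

end

theorem aleph_one_eq : Cardinal.aleph 1 = Order.succ ℵ₀ := by
  rw [← Ordinal.succ_zero, Cardinal.aleph_succ, Cardinal.aleph_zero]

/-- The Erdős–Rado theorem: `ℶ_m⁺ → (ℵ₁)^{m+1}_{<ω}`. -/
theorem ER {β : Type} [Finite β] [Nonempty β] :
    ∀ (m : ℕ) (γ : Type), Cardinal.beth (m : Ordinal) < #γ → ∀ f : Finset γ → β,
      ∃ H : Set γ, Cardinal.aleph 1 ≤ #H ∧ ∃ i : β,
        ∀ s : Finset γ, ↑s ⊆ H → s.card = m + 1 → f s = i := by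
  intro m
  induction m with
  | zero =>
    intro γ hγ f
    have hγ0 : ℵ₀ < #γ := by simpa using hγ
    classical
    set C : β → Set γ := fun b => {x : γ | f {x} = b} with hC
    have hex : ∃ b, Cardinal.aleph 1 ≤ #(C b) := by
      by_contra h
      push_neg at h
      have hall : ∀ b, #(C b) ≤ ℵ₀ := by
        intro b
        have := h b
        rwa [aleph_one_eq, Order.lt_succ_iff] at this
      have huniv : (Set.univ : Set γ) = ⋃ b, C b := by
        ext x
        simp only [Set.mem_univ, Set.mem_iUnion, true_iff]
        exact ⟨f {x}, rfl⟩
      have : #γ ≤ ℵ₀ := by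
        rw [← Cardinal.mk_univ, huniv]
        exact mk_iUnion_le' _ le_rfl Cardinal.mk_le_aleph0 hall
      exact absurd this (not_le.2 hγ0)
    obtain ⟨b, hb⟩ := hex
    refine ⟨C b, hb, b, ?_⟩
    intro s hs hcard
    obtain ⟨x, rfl⟩ := Finset.card_eq_one.1 hcard
    have : x ∈ C b := hs (by simp)
    exact this
  | succ m IH =>
    intro γ hγ f
    classical
    set κ : Cardinal := Cardinal.beth (m : Ordinal) with hκdef
    have hκ : ℵ₀ ≤ κ := Cardinal.aleph0_le_beth _
    have h2κ : 2 ^ κ = Cardinal.beth ((m + 1 : ℕ) : Ordinal) := by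
      rw [hκdef, ← Cardinal.beth_succ]
      congr 1
    have hγ2 : 2 ^ κ < #γ := by rw [h2κ]; exact hγ
    haveI : Nonempty γ := by
      rw [← Cardinal.mk_ne_zero_iff]
      intro h0
      rw [h0] at hγ2
      exact absurd hγ2 (by simp)
    have hβκ : #β ≤ κ := Cardinal.mk_le_aleph0.trans hκ
    obtain ⟨a, u, hinj, hend⟩ := step f κ hκ hβκ hγ2
    have hI : Cardinal.beth (m : Ordinal) < #(Idx κ) := by
      rw [card_Idx]
      exact Order.lt_succ κ
    set g : Finset (Idx κ) → β := fun s => f (insert u (s.image a)) with hg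
    obtain ⟨H, hH, i₀, hmono⟩ := IH (Idx κ) hI g
    refine ⟨a '' H, by rwa [Cardinal.mk_image_eq hinj], i₀, ?_⟩
    intro t ht hcard
    have htr : Set.InjOn a (a ⁻¹' ↑t) := fun x _ y _ h => hinj h
    set s₁ : Finset (Idx κ) := t.preimage a htr with hs₁
    have himg : s₁.image a = t := by
      rw [hs₁, Finset.image_preimage]
      refine Finset.filter_true_of_mem ?_
      intro x hx
      obtain ⟨j, hj, rfl⟩ := ht hx
      exact Set.mem_range_self j
    have hcard₁ : s₁.card = m + 2 := by
      rw [← hcard, ← himg, Finset.card_image_of_injective _ hinj]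
    have hs₁H : ↑s₁ ⊆ H := by
      intro j hj
      have : a j ∈ t := Finset.mem_preimage.1 hj
      obtain ⟨j', hj', hjj⟩ := ht this
      exact (hinj hjj) ▸ hj'
    have hne : s₁.Nonempty := Finset.card_pos.1 (by omega)
    set i : Idx κ := s₁.max' hne with hi
    set s : Finset (Idx κ) := s₁.erase i with hs
    have hscard : s.card = m + 1 := by
      rw [hs, Finset.card_erase_of_mem (s₁.max'_mem hne), hcard₁]
      omega
    have hlt : ∀ j ∈ s, j < i := by
      intro j hj
      obtain ⟨hne', hj₁⟩ := Finset.mem_erase.1 hj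
      exact lt_of_le_of_ne (s₁.le_max' j hj₁) hne'
    have ht' : t = insert (a i) (s.image a) := by
      rw [← himg]
      conv_lhs => rw [← Finset.insert_erase (s₁.max'_mem hne)]
      rw [Finset.image_insert]
    rw [ht', hend s i hlt]
    exact hmono s (fun j hj => hs₁H (Finset.erase_subset _ _ hj)) hscard

end ErdosRadoAux

/-- For every positive integer `r`, if the `r`-element subsets of a set of cardinality `ℶ_ω`
are coloured with finitely many colours, then there is a subset of cardinality `ℵ₁` all of
whose `r`-element subsets receive the same colour. -/
theorem erdos_rado_beth_omega (r : ℕ) (hr : 0 < r)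
    (α β : Type) (hα : #α = Cardinal.beth Ordinal.omega0) (hβ : Finite β)
    (c : Finset α → β) :
    ∃ H : Set α, #H = aleph 1 ∧ ∃ i : β,
      ∀ s : Finset α, ↑s ⊆ H → s.card = r → c s = i := by
  obtain ⟨m, rfl⟩ := Nat.exists_eq_succ_of_ne_zero hr.ne'
  haveI : Nonempty β := ⟨c ∅⟩
  have hγ : Cardinal.beth (m : Ordinal) < #α := by
    rw [hα]
    exact Cardinal.beth_lt_beth.2 (Ordinal.nat_lt_omega0 m)
  obtain ⟨H, hH, i₀, hmono⟩ := ErdosRadoAux.ER m α hγ c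
  obtain ⟨p, hp⟩ := Cardinal.le_mk_iff_exists_set.1 hH
  refine ⟨Subtype.val '' p, ?_, i₀, ?_⟩
  · rw [Cardinal.mk_image_eq Subtype.val_injective, hp]
  · intro s hs hcard
    refine hmono s ?_ hcard
    intro x hx
    obtain ⟨⟨y, hy⟩, _, rfl⟩ := hs hx
    exact hy
end

section
/- Let k be a positive integer, let 0 ≤ a < b ≤ k be integers, and let π_a and π_b be the patterns consisting of a twos followed by 2(k−a) ones, and b twos followed by 2(k−b) ones, respectively. Let (f_γ)_{γ < ω·(b−a+2)} be a strictly increasing (with respect to the well-ordered basis) family of distinct basis vectors of ℚ^{ℶ_ω}, indexed by the ordinals below ω·(b−a+2), and for each i < ω define x_i = Σ_{r=0}^{a−1} f_r + Σ_{r=1}^{b−a} f_{ω·r+i} + Σ_{r=0}^{2(k−b)−1} (1/2) f_{ω·(b−a+1)+r}. Then for all i, j ∈ ℕ, the pattern of x_i + x_j equals π_b if i = j, and equals π_a if i ≠ j. -/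
open Cardinal

/-- The pattern of a finitely supported function `x : ι →₀ ℚ` over a linearly ordered index
type: the list of the nonzero values of `x`, taken in increasing order of their indices. -/
def pattern {ι : Type*} [LinearOrder ι] (x : ι →₀ ℚ) : List ℚ :=
  (x.support.sort (· ≤ ·)).map x

lemma sum_single_apply_notmem {ι : Type*} [DecidableEq ι] (l : List (ι × ℚ)) (t : ι)
    (ht : t ∉ l.map Prod.fst) :
    ((l.map (fun p => Finsupp.single p.1 p.2)).sum) t = 0 := by
  induction l with
  | nil => simp
  | cons p l ih =>
    simp only [List.map_cons, List.sum_cons, Finsupp.add_apply, List.mem_cons, not_or] at ht ⊢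
    rw [ih ht.2, add_zero, Finsupp.single_apply, if_neg (fun h => ht.1 h.symm)]

lemma pattern_list {ι : Type*} [LinearOrder ι] :
    ∀ (l : List (ι × ℚ)), (l.map Prod.fst).Pairwise (· < ·) → (∀ p ∈ l, p.2 ≠ 0) →
      pattern ((l.map (fun p => Finsupp.single p.1 p.2)).sum) = l.map Prod.snd
  | [], _, _ => by simp [pattern]
  | p :: l, hs, hv => by
    classical
    set y' := ((l.map (fun p => Finsupp.single p.1 p.2)).sum) with hy'
    have hlt : ∀ q ∈ l, p.1 < q.1 := by
      intro q hq
      exact (List.pairwise_cons.1 (by simpa only [List.map_cons] using hs)).1 _ (List.mem_map_of_mem hq)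
    have hsupp' : y'.support ⊆ (l.map Prod.fst).toFinset := by
      intro t ht
      by_contra h
      exact (Finsupp.mem_support_iff.1 ht) (sum_single_apply_notmem l t (by simpa using h))
    have hp1 : p.1 ∉ y'.support := by
      intro h
      have := hsupp' h
      simp only [List.mem_toFinset, List.mem_map] at this
      obtain ⟨q, hq, hq'⟩ := this
      exact absurd hq' (ne_of_gt (hlt q hq))
    have hdisj : Disjoint (Finsupp.single p.1 p.2).support y'.support := by
      rw [Finsupp.support_single_ne_zero _ (hv p (List.mem_cons_self))]
      simpa using hp1
    have hsum : ((List.map (fun p => Finsupp.single p.1 p.2) (p :: l)).sum)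
        = Finsupp.single p.1 p.2 + y' := by simp [hy']
    have hsupp : ((List.map (fun p => Finsupp.single p.1 p.2) (p :: l)).sum).support
        = insert p.1 y'.support := by
      rw [hsum, Finsupp.support_add_eq hdisj,
        Finsupp.support_single_ne_zero _ (hv p (List.mem_cons_self))]
      rfl
    have hsort : (insert p.1 y'.support).sort (· ≤ ·) = p.1 :: y'.support.sort (· ≤ ·) :=
      Finset.sort_insert _ (fun t ht => le_of_lt (by
        have h2 := hsupp' ht
        rw [List.mem_toFinset, List.mem_map] at h2
        obtain ⟨q, hq, rfl⟩ := h2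
        exact hlt _ hq)) hp1
    have ih := pattern_list l (List.pairwise_cons.1 (by simpa only [List.map_cons] using hs)).2
      (fun q hq => hv q (List.mem_cons_of_mem _ hq))
    have hy'p : y' p.1 = 0 := Finsupp.notMem_support_iff.1 hp1
    unfold pattern at ih ⊢
    rw [hsupp, hsort, hsum, List.map_cons]
    congr 1
    · simp [Finsupp.add_apply, hy'p]
    · rw [← ih]
      apply List.map_congr_left
      intro t ht
      have htmem : t ∈ y'.support := (Finset.mem_sort _).1 ht
      simp only [Finsupp.add_apply, ← hy']
      rw [Finsupp.single_apply, if_neg (fun h => by subst h; exact hp1 htmem), zero_add]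

section helpers2
variable {M : Type*} [AddCommMonoid M]

lemma list_sum_range' (F : ℕ → M) : ∀ n : ℕ,
    ((List.range n).map F).sum = ∑ r ∈ Finset.range n, F r
  | 0 => by simp
  | n+1 => by
    rw [List.range_succ, List.map_append, List.sum_append, list_sum_range' F n,
      Finset.sum_range_succ]
    simp

lemma sum_Icc_one' (F : ℕ → M) : ∀ m : ℕ,
    ∑ r ∈ Finset.Icc 1 m, F r = ∑ r ∈ Finset.range m, F (1+r)
  | 0 => by simp
  | m+1 => by
    rw [Finset.sum_Icc_succ_top (by omega) F, sum_Icc_one' F m, Finset.sum_range_succ,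
      Nat.add_comm 1 m]

lemma sum_map_flat_pair {α : Type*} (u v : ℕ → α) (F : α → M) : ∀ n : ℕ,
    (((List.range n).flatMap (fun r => [u r, v r])).map F).sum
      = (∑ r ∈ Finset.range n, F (u r)) + ∑ r ∈ Finset.range n, F (v r)
  | 0 => by simp
  | n+1 => by
    rw [List.range_succ, List.flatMap_append, List.map_append, List.sum_append,
      sum_map_flat_pair u v F n, Finset.sum_range_succ, Finset.sum_range_succ]
    simp
    abel

lemma map_snd_flat_pair {α : Type*} (u v : ℕ → α) (c : ℚ) : ∀ n : ℕ,
    (((List.range n).flatMap (fun r => [(u r, c), (v r, c)])).map Prod.snd)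
      = List.replicate (2*n) c
  | 0 => by simp
  | n+1 => by
    rw [List.range_succ, List.flatMap_append, List.map_append, map_snd_flat_pair u v c n,
      show 2*(n+1) = 2*n+2 by ring_nf, List.replicate_add]
    simp

lemma pairwise_flat_pair {α : Type*} (R : α → α → Prop) (u v : ℕ → α)
    (huv : ∀ r, R (u r) (v r))
    (hcross : ∀ r s, r < s →
      (R (u r) (u s) ∧ R (u r) (v s)) ∧ (R (v r) (u s) ∧ R (v r) (v s))) :
    ∀ n, ((List.range n).flatMap (fun r => [u r, v r])).Pairwise R
  | 0 => by simp
  | n+1 => by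
    rw [List.range_succ, List.flatMap_append, List.pairwise_append]
    refine ⟨pairwise_flat_pair R u v huv hcross n, by simp [huv n], ?_⟩
    intro p hp q hq
    simp only [List.mem_flatMap, List.mem_range, List.mem_cons, List.not_mem_nil, or_false,
      List.mem_singleton, List.flatMap_cons, List.flatMap_nil, List.append_nil] at hp hq
    obtain ⟨r, hr, hp⟩ := hp
    rcases hp with rfl | rfl <;> rcases hq with rfl | rfl
    · exact ((hcross r n hr).1).1
    · exact ((hcross r n hr).1).2
    · exact ((hcross r n hr).2).1
    · exact ((hcross r n hr).2).2

end helpers2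

lemma pattern_eq_of_list {ι : Type*} [LinearOrder ι] {D : Ordinal} {f : Ordinal → ι}
    (hf : StrictMonoOn f (Set.Iio D)) (Lo : List (Ordinal × ℚ))
    (hs : (Lo.map Prod.fst).Pairwise (· < ·)) (hmem : ∀ p ∈ Lo, p.1 < D)
    (hv : ∀ p ∈ Lo, p.2 ≠ 0) :
    pattern ((Lo.map (fun p => Finsupp.single (f p.1) p.2)).sum) = Lo.map Prod.snd := by
  have h1 : Lo.map (fun p => Finsupp.single (f p.1) p.2)
      = (Lo.map (fun p => (f p.1, p.2))).map (fun p => Finsupp.single p.1 p.2) := by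
    rw [List.map_map]; rfl
  have h2 := pattern_list (Lo.map (fun p => (f p.1, p.2)))
    (by
      rw [List.map_map]
      have hpw : Lo.Pairwise (fun p q => p.1 < q.1) := List.pairwise_map.1 hs
      refine List.pairwise_map.2 (hpw.imp_of_mem ?_)
      intro p q hp hq h
      exact hf (hmem _ hp) (hmem _ hq) h)
    (by
      intro p hp
      obtain ⟨q, hq, rfl⟩ := List.mem_map.1 hp
      exact hv q hq)
  rw [h1, h2, List.map_map]
  rfl

/-- Let `k` be a positive integer, `0 ≤ a < b ≤ k`. Let `f` enumerate, strictly increasingly,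
indices of basis vectors of the rational vector space of dimension `ℶ_ω` (realised as
finitely supported functions on the well-ordered index type `(beth ω).ord.toType`, whose
basis vectors are `Finsupp.single _ 1`) over the ordinals below `ω·(b−a+2)`, and for `i < ω` set
`x_i = Σ_{r<a} f_r + Σ_{r=1}^{b−a} f_{ω·r+i} + Σ_{r<2(k−b)} (1/2) f_{ω·(b−a+1)+r}`.
Then the pattern of `x_i + x_j` is `b` twos followed by `2(k−b)` ones if `i = j`,
and `a` twos followed by `2(k−a)` ones if `i ≠ j`. -/
theorem pattern_add_eq_ite (k a b : ℕ) (hk : 0 < k) (hab : a < b) (hbk : b ≤ k)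
    (f : Ordinal → (Cardinal.beth Ordinal.omega0).ord.ToType)
    (hf : StrictMonoOn f (Set.Iio (Ordinal.omega0 * ((b - a + 2 : ℕ) : Ordinal))))
    (x : ℕ → ((Cardinal.beth Ordinal.omega0).ord.ToType →₀ ℚ))
    (hx : ∀ i : ℕ, x i =
      (∑ r ∈ Finset.range a, Finsupp.single (f (r : Ordinal)) (1 : ℚ))
      + (∑ r ∈ Finset.Icc 1 (b - a),
          Finsupp.single (f (Ordinal.omega0 * (r : Ordinal) + (i : Ordinal))) (1 : ℚ))
      + (∑ r ∈ Finset.range (2 * (k - b)),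
          Finsupp.single
            (f (Ordinal.omega0 * ((b - a + 1 : ℕ) : Ordinal) + (r : Ordinal))) ((1 : ℚ)/2))) :
    ∀ i j : ℕ,
      pattern (x i + x j) =
        if i = j then
          List.replicate b (2 : ℚ) ++ List.replicate (2 * (k - b)) (1 : ℚ)
        else
          List.replicate a (2 : ℚ) ++ List.replicate (2 * (k - a)) (1 : ℚ) := by
  set m := b - a with hm
  set n := 2 * (k - b) with hn
  -- ordinal helper facts
  have hcast : ∀ r : ℕ, ((r : ℕ) : Ordinal) + 1 = ((r + 1 : ℕ) : Ordinal) := by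
    intro r; push_cast; ring
  have hlt : ∀ (r s c d : ℕ), r < s →
      Ordinal.omega0 * ((r : ℕ) : Ordinal) + ((c : ℕ) : Ordinal)
        < Ordinal.omega0 * ((s : ℕ) : Ordinal) + ((d : ℕ) : Ordinal) := by
    intro r s c d h
    calc Ordinal.omega0 * ((r : ℕ) : Ordinal) + ((c : ℕ) : Ordinal)
        < Ordinal.omega0 * ((r : ℕ) : Ordinal) + Ordinal.omega0 :=
          add_lt_add_right (Ordinal.nat_lt_omega0 c) _
      _ = Ordinal.omega0 * (((r : ℕ) : Ordinal) + 1) := by rw [mul_add, mul_one]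
      _ ≤ Ordinal.omega0 * ((s : ℕ) : Ordinal) := mul_le_mul_right (by
            rw [hcast r]; exact_mod_cast (by omega : r + 1 ≤ s)) _
      _ ≤ _ := le_self_add
  have hlt0 : ∀ (r s d : ℕ), 1 ≤ s →
      ((r : ℕ) : Ordinal) < Ordinal.omega0 * ((s : ℕ) : Ordinal) + ((d : ℕ) : Ordinal) := by
    intro r s d h
    calc ((r : ℕ) : Ordinal) < Ordinal.omega0 := Ordinal.nat_lt_omega0 r
      _ = Ordinal.omega0 * ((1 : ℕ) : Ordinal) := by simp
      _ ≤ Ordinal.omega0 * ((s : ℕ) : Ordinal) := mul_le_mul_right (by exact_mod_cast h) _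
      _ ≤ _ := le_self_add
  have hD : ∀ (r d : ℕ), r < m + 2 →
      Ordinal.omega0 * ((r : ℕ) : Ordinal) + ((d : ℕ) : Ordinal)
        < Ordinal.omega0 * ((m + 2 : ℕ) : Ordinal) := by
    intro r d h
    have := hlt r (m + 2) d 0 h
    simpa using this
  have hD0 : ∀ r : ℕ, ((r : ℕ) : Ordinal) < Ordinal.omega0 * ((m + 2 : ℕ) : Ordinal) := by
    intro r
    have := hlt0 r (m + 2) 0 (by omega)
    simpa using this
  -- merging lemmas
  have hm2 : ∀ (N : ℕ) (g : ℕ → Ordinal),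
      (∑ r ∈ Finset.range N, Finsupp.single (f (g r)) (1 : ℚ))
        + (∑ r ∈ Finset.range N, Finsupp.single (f (g r)) (1 : ℚ))
      = ∑ r ∈ Finset.range N, Finsupp.single (f (g r)) (2 : ℚ) := by
    intro N g
    rw [← Finset.sum_add_distrib]
    exact Finset.sum_congr rfl fun r _ => by rw [← Finsupp.single_add]; norm_num
  have hm1 : ∀ (N : ℕ) (g : ℕ → Ordinal),
      (∑ r ∈ Finset.range N, Finsupp.single (f (g r)) ((1 : ℚ)/2))
        + (∑ r ∈ Finset.range N, Finsupp.single (f (g r)) ((1 : ℚ)/2))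
      = ∑ r ∈ Finset.range N, Finsupp.single (f (g r)) (1 : ℚ) := by
    intro N g
    rw [← Finset.sum_add_distrib]
    exact Finset.sum_congr rfl fun r _ => by rw [← Finsupp.single_add]; norm_num
  -- the diagonal case
  have main_eq : ∀ i : ℕ, pattern (x i + x i)
      = List.replicate b (2 : ℚ) ++ List.replicate n (1 : ℚ) := by
    intro i
    set Lo : List (Ordinal × ℚ) :=
      ((List.range a).map fun r => (((r : ℕ) : Ordinal), (2 : ℚ)))
      ++ (((List.range m).map fun r =>
          (Ordinal.omega0 * ((1 + r : ℕ) : Ordinal) + ((i : ℕ) : Ordinal), (2 : ℚ)))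
      ++ ((List.range n).map fun r =>
          (Ordinal.omega0 * ((m + 1 : ℕ) : Ordinal) + ((r : ℕ) : Ordinal), (1 : ℚ)))) with hLo
    have hxx : x i + x i = (Lo.map (fun p => Finsupp.single (f p.1) p.2)).sum := by
      rw [hx i, sum_Icc_one', hLo]
      simp only [List.map_append, List.sum_append, List.map_map, Function.comp_def]
      rw [list_sum_range', list_sum_range', list_sum_range',
        ← hm2 a (fun r => ((r : ℕ) : Ordinal)),
        ← hm2 m (fun r => Ordinal.omega0 * ((1 + r : ℕ) : Ordinal) + ((i : ℕ) : Ordinal)),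
        ← hm1 n (fun r => Ordinal.omega0 * ((m + 1 : ℕ) : Ordinal) + ((r : ℕ) : Ordinal))]
      abel
    have hsort : (Lo.map Prod.fst).Pairwise (· < ·) := by
      rw [hLo]
      simp only [List.map_append, List.map_map, Function.comp_def]
      rw [List.pairwise_append]
      refine ⟨List.pairwise_map.2 ((List.pairwise_lt_range (n := a)).imp
        (fun h => by exact_mod_cast h)), ?_, ?_⟩
      · rw [List.pairwise_append]
        refine ⟨List.pairwise_map.2 ((List.pairwise_lt_range (n := m)).imp
          (fun h => hlt _ _ _ _ (by omega))), List.pairwise_map.2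
          ((List.pairwise_lt_range (n := n)).imp
            (fun h => add_lt_add_right (by exact_mod_cast h) _)), ?_⟩
        intro p hp q hq
        simp only [List.mem_map, List.mem_range] at hp hq
        obtain ⟨r, hr, rfl⟩ := hp
        obtain ⟨s, hs, rfl⟩ := hq
        exact hlt _ _ _ _ (by omega)
      · intro p hp q hq
        simp only [List.mem_map, List.mem_append, List.mem_range] at hp hq
        obtain ⟨r, hr, rfl⟩ := hp
        rcases hq with ⟨s, hs, rfl⟩ | ⟨s, hs, rfl⟩
        · exact hlt0 _ _ _ (by omega)
        · exact hlt0 _ _ _ (by omega)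
    have hmemD : ∀ p ∈ Lo, p.1 < Ordinal.omega0 * ((m + 2 : ℕ) : Ordinal) := by
      intro p hp
      rw [hLo] at hp
      simp only [List.mem_append, List.mem_map, List.mem_range] at hp
      rcases hp with ⟨r, hr, rfl⟩ | ⟨r, hr, rfl⟩ | ⟨r, hr, rfl⟩
      · exact hD0 r
      · exact hD _ _ (by omega)
      · exact hD _ _ (by omega)
    have hv2 : ∀ p ∈ Lo, p.2 ≠ 0 := by
      intro p hp
      rw [hLo] at hp
      simp only [List.mem_append, List.mem_map, List.mem_range] at hp
      rcases hp with ⟨r, hr, rfl⟩ | ⟨r, hr, rfl⟩ | ⟨r, hr, rfl⟩ <;> norm_num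
    rw [hxx, pattern_eq_of_list hf Lo hsort hmemD hv2, hLo]
    simp only [List.map_append, List.map_map, Function.comp_def, List.map_const',
      List.length_range]
    rw [show b = a + m by omega, List.replicate_add, List.append_assoc]
  -- the off-diagonal case
  have main_ne : ∀ i j : ℕ, i < j → pattern (x i + x j)
      = List.replicate a (2 : ℚ) ++ List.replicate (2 * (k - a)) (1 : ℚ) := by
    intro i j hij
    set Lo : List (Ordinal × ℚ) :=
      ((List.range a).map fun r => (((r : ℕ) : Ordinal), (2 : ℚ)))
      ++ (((List.range m).flatMap fun r =>
          [(Ordinal.omega0 * ((1 + r : ℕ) : Ordinal) + ((i : ℕ) : Ordinal), (1 : ℚ)),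
           (Ordinal.omega0 * ((1 + r : ℕ) : Ordinal) + ((j : ℕ) : Ordinal), (1 : ℚ))])
      ++ ((List.range n).map fun r =>
          (Ordinal.omega0 * ((m + 1 : ℕ) : Ordinal) + ((r : ℕ) : Ordinal), (1 : ℚ)))) with hLo
    have hxx : x i + x j = (Lo.map (fun p => Finsupp.single (f p.1) p.2)).sum := by
      rw [hx i, hx j, sum_Icc_one', sum_Icc_one', hLo]
      simp only [List.map_append, List.sum_append, List.map_map, Function.comp_def]
      rw [list_sum_range', list_sum_range',
        sum_map_flat_pair
          (fun r => (Ordinal.omega0 * ((1 + r : ℕ) : Ordinal) + ((i : ℕ) : Ordinal), (1 : ℚ)))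
          (fun r => (Ordinal.omega0 * ((1 + r : ℕ) : Ordinal) + ((j : ℕ) : Ordinal), (1 : ℚ)))
          (fun p => Finsupp.single (f p.1) p.2) m,
        ← hm2 a (fun r => ((r : ℕ) : Ordinal)),
        ← hm1 n (fun r => Ordinal.omega0 * ((m + 1 : ℕ) : Ordinal) + ((r : ℕ) : Ordinal))]
      abel
    have hsort : (Lo.map Prod.fst).Pairwise (· < ·) := by
      rw [hLo]
      simp only [List.map_append, List.map_map, Function.comp_def, List.map_flatMap,
        List.map_cons, List.map_nil]
      rw [List.pairwise_append]
      refine ⟨List.pairwise_map.2 ((List.pairwise_lt_range (n := a)).imp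
        (fun h => by exact_mod_cast h)), ?_, ?_⟩
      · rw [List.pairwise_append]
        refine ⟨pairwise_flat_pair _ _ _
            (fun r => add_lt_add_right (by exact_mod_cast hij) _)
            (fun r s h => by
              refine ⟨⟨?_, ?_⟩, ?_, ?_⟩ <;> exact hlt _ _ _ _ (by omega)) m,
          List.pairwise_map.2 ((List.pairwise_lt_range (n := n)).imp
            (fun h => add_lt_add_right (by exact_mod_cast h) _)), ?_⟩
        intro p hp q hq
        simp only [List.mem_flatMap, List.mem_range, List.mem_cons, List.not_mem_nil,
          or_false, List.mem_map] at hp hq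
        obtain ⟨r, hr, hp⟩ := hp
        obtain ⟨s, hs, rfl⟩ := hq
        rcases hp with rfl | rfl <;> exact hlt _ _ _ _ (by omega)
      · intro p hp q hq
        simp only [List.mem_map, List.mem_append, List.mem_range, List.mem_flatMap,
          List.mem_cons, List.not_mem_nil, or_false] at hp hq
        obtain ⟨r, hr, rfl⟩ := hp
        rcases hq with ⟨s, hs, rfl | rfl⟩ | ⟨s, hs, rfl⟩
        · exact hlt0 _ _ _ (by omega)
        · exact hlt0 _ _ _ (by omega)
        · exact hlt0 _ _ _ (by omega)
    have hmemD : ∀ p ∈ Lo, p.1 < Ordinal.omega0 * ((m + 2 : ℕ) : Ordinal) := by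
      intro p hp
      rw [hLo] at hp
      simp only [List.mem_append, List.mem_map, List.mem_range, List.mem_flatMap,
        List.mem_cons, List.not_mem_nil, or_false] at hp
      rcases hp with ⟨r, hr, rfl⟩ | ⟨r, hr, rfl | rfl⟩ | ⟨r, hr, rfl⟩
      · exact hD0 r
      · exact hD _ _ (by omega)
      · exact hD _ _ (by omega)
      · exact hD _ _ (by omega)
    have hv2 : ∀ p ∈ Lo, p.2 ≠ 0 := by
      intro p hp
      rw [hLo] at hp
      simp only [List.mem_append, List.mem_map, List.mem_range, List.mem_flatMap,
        List.mem_cons, List.not_mem_nil, or_false] at hp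
      rcases hp with ⟨r, hr, rfl⟩ | ⟨r, hr, rfl | rfl⟩ | ⟨r, hr, rfl⟩ <;> norm_num
    rw [hxx, pattern_eq_of_list hf Lo hsort hmemD hv2, hLo]
    simp only [List.map_append, List.map_map, Function.comp_def, List.map_const',
      List.length_range]
    rw [map_snd_flat_pair]
    rw [show 2 * (k - a) = 2 * m + n by omega, List.replicate_add]
  -- conclusion
  intro i j
  by_cases hij : i = j
  · subst hij
    rw [if_pos rfl]
    exact main_eq i
  · rw [if_neg hij]
    rcases Nat.lt_or_ge i j with h | h
    · exact main_ne i j h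
    · rw [add_comm (x i) (x j)]
      exact main_ne j i (by omega)
end
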